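/- arXiv:1703.00918 — 4 statements merged into one kernel-verified Lean document; each statement's English description precedes it below -/
import Mathlib

section
/- Let n ≥ 2 and let X = μ + R•(A *ᵥ U) be an elliptically distributed random vector with benchmark Y = a ⬝ᵥ X. For every Borel set B₁ ⊆ ℝ such that the event B := {Y ∈ B₁} has P[B] > 0, the conditional covariance matrix of X on B satisfies Var_B[X] = k(B) • Σ + (Var_B[Y] − k(B)·â) • (β βᵀ), where k(B) := (1/(n−1)) · (E_B[R²] − E_B[(Y − a⬝ᵥμ)²]/â). -/
open MeasureTheory ProbabilityTheory Matrix

/-- Expectation of a real random variable under the conditional probability `P[|B]`. -/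
noncomputable def condE {Ω : Type*} [MeasurableSpace Ω] (P : Measure Ω) (B : Set Ω)
    (f : Ω → ℝ) : ℝ :=
  ∫ ω, f ω ∂(P[|B])

/-- Conditional variance on the event `B`. -/
noncomputable def condVar {Ω : Type*} [MeasurableSpace Ω] (P : Measure Ω) (B : Set Ω)
    (f : Ω → ℝ) : ℝ :=
  condE P B fun ω => (f ω - condE P B f) ^ 2

/-- Conditional covariance on the event `B`. -/
noncomputable def condCov {Ω : Type*} [MeasurableSpace Ω] (P : Measure Ω) (B : Set Ω)
    (f g : Ω → ℝ) : ℝ :=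
  condE P B fun ω => (f ω - condE P B f) * (g ω - condE P B g)

namespace EllipticalAux

variable {n : ℕ}

lemma dp_nonneg (p : Fin n → ℝ) : 0 ≤ p ⬝ᵥ p :=
  Finset.sum_nonneg fun _ _ => mul_self_nonneg _

lemma dp_pos {p : Fin n → ℝ} (hp : p ≠ 0) : 0 < p ⬝ᵥ p := by
  rcases (dp_nonneg p).lt_or_eq with h | h
  · exact h
  · exfalso; apply hp; funext i
    have := (Finset.sum_eq_zero_iff_of_nonneg (fun i _ => mul_self_nonneg (p i))).mp h.symm i
      (Finset.mem_univ i)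
    exact mul_self_eq_zero.mp this

noncomputable def house (p : Fin n → ℝ) : Matrix (Fin n) (Fin n) ℝ :=
  1 - (2 / (p ⬝ᵥ p)) • vecMulVec p p

lemma house_transpose (p : Fin n → ℝ) : (house p)ᵀ = house p := by
  unfold house
  ext i j
  simp only [Matrix.transpose_apply, Matrix.sub_apply, Matrix.smul_apply, Matrix.one_apply,
    Matrix.vecMulVec_apply, smul_eq_mul]
  rw [show (if j = i then (1:ℝ) else 0) = (if i = j then 1 else 0) by simp [eq_comm]]
  ring_nf

lemma house_mulVec (p : Fin n → ℝ) (v : Fin n → ℝ) :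
    house p *ᵥ v = v - ((2 / (p ⬝ᵥ p)) * (p ⬝ᵥ v)) • p := by
  unfold house
  rw [Matrix.sub_mulVec, Matrix.one_mulVec, Matrix.smul_mulVec]
  congr 1
  have h : vecMulVec p p *ᵥ v = (p ⬝ᵥ v) • p := by
    funext i
    simp only [Matrix.mulVec, Matrix.vecMulVec_apply, dotProduct, Pi.smul_apply,
      smul_eq_mul]
    rw [Finset.sum_mul]
    exact Finset.sum_congr rfl fun k _ => by ring
  rw [h, smul_smul]

lemma vecMulVec_mul_self (p : Fin n → ℝ) :
    vecMulVec p p * vecMulVec p p = (p ⬝ᵥ p) • vecMulVec p p := by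
  ext i j
  simp only [Matrix.mul_apply, Matrix.vecMulVec_apply, Matrix.smul_apply, dotProduct,
    smul_eq_mul, Finset.sum_mul]
  exact Finset.sum_congr rfl fun k _ => by ring

lemma house_mul_self (p : Fin n → ℝ) (hp : p ≠ 0) : house p * (house p)ᵀ = 1 := by
  rw [house_transpose]
  have hpp : p ⬝ᵥ p ≠ 0 := ne_of_gt (dp_pos hp)
  unfold house
  simp only [mul_sub, sub_mul, one_mul, mul_one, Matrix.smul_mul, Matrix.mul_smul,
    vecMulVec_mul_self, smul_smul]
  rw [show 2 / (p ⬝ᵥ p) * (2 / (p ⬝ᵥ p) * (p ⬝ᵥ p)) = 2 / (p ⬝ᵥ p) + 2 / (p ⬝ᵥ p) by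
    field_simp; ring]
  module

/-- second-moment bilinear functional -/
noncomputable def phi {Ω : Type*} [MeasurableSpace Ω] (Q : Measure Ω) (R : Ω → ℝ)
    (U : Ω → Fin n → ℝ) (p q : Fin n → ℝ) : ℝ :=
  ∫ ω, R ω ^ 2 * ((p ⬝ᵥ U ω) * (q ⬝ᵥ U ω)) ∂Q

/-- first-moment linear functional -/
noncomputable def psi {Ω : Type*} [MeasurableSpace Ω] (Q : Measure Ω) (R : Ω → ℝ)
    (U : Ω → Fin n → ℝ) (p : Fin n → ℝ) : ℝ :=
  ∫ ω, R ω * (p ⬝ᵥ U ω) ∂Q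

end EllipticalAux

open EllipticalAux

theorem conditional_covariance_matrix_elliptical
    {Ω : Type*} [MeasurableSpace Ω] (P : Measure Ω) [IsProbabilityMeasure P]
    (n : ℕ) (hn : 2 ≤ n)
    (R : Ω → ℝ) (U : Ω → Fin n → ℝ) (hR : Measurable R) (hU : Measurable U)
    (hRpos : ∀ᵐ ω ∂P, 0 < R ω)
    (hR2 : ∫ ω, R ω ^ 2 ∂P = (n : ℝ))
    (hRL2 : MemLp R 2 P)
    (hUsphere : ∀ᵐ ω ∂P, ∑ i, U ω i ^ 2 = 1)
    (hUrot : ∀ O : Matrix (Fin n) (Fin n) ℝ, O * Oᵀ = 1 →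
      Measure.map (fun ω => O *ᵥ U ω) P = Measure.map U P)
    (hindep : IndepFun R U P)
    (μv : Fin n → ℝ) (A : Matrix (Fin n) (Fin n) ℝ) (hA : IsUnit A.det)
    (a : Fin n → ℝ) (ha : a ≠ 0)
    (X : Ω → Fin n → ℝ) (hX : X = fun ω => μv + R ω • (A *ᵥ U ω))
    (Y : Ω → ℝ) (hY : Y = fun ω => a ⬝ᵥ X ω)
    (hXL2 : ∀ i, MemLp (fun ω => X ω i) 2 P)
    (S : Matrix (Fin n) (Fin n) ℝ) (hS : S = A * Aᵀ)
    (ahat : ℝ) (hahat : ahat = a ⬝ᵥ (S *ᵥ a))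
    (β : Fin n → ℝ) (hβ : β = (1 / ahat) • (S *ᵥ a))
    (B₁ : Set ℝ) (hB₁ : MeasurableSet B₁)
    (B : Set Ω) (hB : B = Y ⁻¹' B₁) (hBpos : 0 < P B)
    (kB : ℝ)
    (hkB : kB = (1 / ((n : ℝ) - 1)) *
      (condE P B (fun ω => R ω ^ 2) - condE P B (fun ω => (Y ω - a ⬝ᵥ μv) ^ 2) / ahat)) :
    ∀ i j, condCov P B (fun ω => X ω i) (fun ω => X ω j)
      = kB * S i j + (condVar P B Y - kB * ahat) * (β i * β j) := by
  intro i j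
  set Q : Measure Ω := P[|B] with hQdef
  set w : Fin n → ℝ := Aᵀ *ᵥ a with hwdef
  -- basic linear algebra facts
  have hAT : IsUnit Aᵀ.det := by rwa [Matrix.det_transpose]
  have hwne : w ≠ 0 := by
    intro h
    apply ha
    have h2 := congrArg (fun v => Aᵀ⁻¹ *ᵥ v) h
    simpa [hwdef, Matrix.mulVec_mulVec, Matrix.nonsing_inv_mul _ hAT] using h2
  have hwd : ahat = w ⬝ᵥ w := by
    rw [hahat, hS, hwdef, ← Matrix.mulVec_mulVec, Matrix.dotProduct_mulVec,
      ← Matrix.mulVec_transpose]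
  have hwdpos : 0 < ahat := hwd ▸ dp_pos hwne
  have hwdne : ahat ≠ 0 := ne_of_gt hwdpos
  have hSa : S *ᵥ a = A *ᵥ w := by rw [hS, hwdef, ← Matrix.mulVec_mulVec]
  have hrow_w : ∀ i, (fun k => A i k) ⬝ᵥ w = β i * ahat := by
    intro i
    have : β i = (1 / ahat) * (A *ᵥ w) i := by rw [hβ, hSa]; rfl
    rw [this]
    have : (A *ᵥ w) i = (fun k => A i k) ⬝ᵥ w := rfl
    field_simp [this]
    exact this.symm
  have hrow_dot : ∀ i j, (fun k => A i k) ⬝ᵥ (fun k => A j k) = S i j := by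
    intro i j
    rw [hS]
    simp [Matrix.mul_apply, dotProduct, Matrix.transpose_apply]
  -- measurability and basic facts
  have mdp : ∀ p : Fin n → ℝ, Measurable fun u : Fin n → ℝ => p ⬝ᵥ u := by
    intro p
    simp only [dotProduct]
    exact Finset.measurable_sum _ fun i _ => by fun_prop
  have hYeq : ∀ ω, Y ω = a ⬝ᵥ μv + R ω * (w ⬝ᵥ U ω) := by
    intro ω
    rw [hY, hX]
    simp only [dotProduct_add, dotProduct_smul, smul_eq_mul]
    rw [Matrix.dotProduct_mulVec, ← Matrix.mulVec_transpose]
  have hYm : Measurable Y := by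
    rw [funext hYeq]
    exact measurable_const.add (hR.mul ((mdp w).comp hU))
  have hBm : MeasurableSet B := hB ▸ hYm hB₁
  have hBne : P B ≠ 0 := ne_of_gt hBpos
  haveI hQprob : IsProbabilityMeasure Q := cond_isProbabilityMeasure hBne
  have hQac : Q ≪ P := cond_absolutelyContinuous
  have hQint : ∀ f : Ω → ℝ, ∫ ω, f ω ∂Q = (P B).toReal⁻¹ * ∫ ω, Set.indicator B f ω ∂P := by
    intro f
    rw [hQdef]
    show ∫ ω, f ω ∂((P B)⁻¹ • P.restrict B) = _
    rw [integral_smul_measure, integral_indicator hBm, ENNReal.toReal_inv]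
    rfl
  have hUQ : ∀ᵐ ω ∂Q, ∑ i, U ω i ^ 2 = 1 := hQac.ae_le hUsphere
  have hdpb : ∀ p : Fin n → ℝ, ∀ᵐ ω ∂Q, |p ⬝ᵥ U ω| ≤ Real.sqrt (p ⬝ᵥ p) := by
    intro p
    filter_upwards [hUQ] with ω hω
    have h1 : (p ⬝ᵥ U ω) ^ 2 ≤ p ⬝ᵥ p := by
      calc (p ⬝ᵥ U ω) ^ 2 = (∑ k, p k * U ω k) ^ 2 := rfl
        _ ≤ (∑ k, p k ^ 2) * (∑ k, U ω k ^ 2) :=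
            Finset.sum_mul_sq_le_sq_mul_sq Finset.univ p (U ω)
        _ = p ⬝ᵥ p := by
            rw [hω, mul_one]; exact Finset.sum_congr rfl fun k _ => by ring
    calc |p ⬝ᵥ U ω| = Real.sqrt ((p ⬝ᵥ U ω) ^ 2) := (Real.sqrt_sq_eq_abs _).symm
      _ ≤ Real.sqrt (p ⬝ᵥ p) := Real.sqrt_le_sqrt h1
  -- integrability
  have toQ : ∀ {f : Ω → ℝ}, Integrable f P → Integrable f Q := by
    intro f hf
    rw [hQdef]
    show Integrable f ((P B)⁻¹ • P.restrict B)
    exact (hf.restrict).smul_measure (by simp [hBne])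
  have hRi2 : Integrable (fun ω => R ω ^ 2) Q := toQ hRL2.integrable_sq
  have hRi : Integrable R Q := toQ (hRL2.integrable one_le_two)
  have hIp : ∀ p : Fin n → ℝ, Integrable (fun ω => R ω * (p ⬝ᵥ U ω)) Q := by
    intro p
    refine Integrable.mono' (g := fun ω => Real.sqrt (p ⬝ᵥ p) * |R ω|)
      ((hRi.abs).const_mul _) (hR.mul ((mdp p).comp hU)).aestronglyMeasurable ?_
    filter_upwards [hdpb p] with ω hω
    rw [Real.norm_eq_abs, abs_mul]
    calc |R ω| * |p ⬝ᵥ U ω| ≤ |R ω| * Real.sqrt (p ⬝ᵥ p) :=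
          mul_le_mul_of_nonneg_left hω (abs_nonneg _)
      _ = _ := mul_comm _ _
  have hIq : ∀ p q : Fin n → ℝ,
      Integrable (fun ω => R ω ^ 2 * ((p ⬝ᵥ U ω) * (q ⬝ᵥ U ω))) Q := by
    intro p q
    refine Integrable.mono' (g := fun ω => (Real.sqrt (p ⬝ᵥ p) * Real.sqrt (q ⬝ᵥ q)) * R ω ^ 2)
      (hRi2.const_mul _)
      (((hR.pow_const 2).mul (((mdp p).comp hU).mul ((mdp q).comp hU))).aestronglyMeasurable) ?_
    filter_upwards [hdpb p, hdpb q] with ω h1 h2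
    rw [Real.norm_eq_abs, abs_mul, abs_mul, abs_of_nonneg (sq_nonneg (R ω))]
    calc R ω ^ 2 * (|p ⬝ᵥ U ω| * |q ⬝ᵥ U ω|)
        ≤ R ω ^ 2 * (Real.sqrt (p ⬝ᵥ p) * Real.sqrt (q ⬝ᵥ q)) := by
          refine mul_le_mul_of_nonneg_left ?_ (sq_nonneg _)
          exact mul_le_mul h1 h2 (abs_nonneg _) (Real.sqrt_nonneg _)
      _ = _ := mul_comm _ _
  -- master invariance lemma
  have hMulVecM : ∀ O : Matrix (Fin n) (Fin n) ℝ, Measurable (fun u : Fin n → ℝ => O *ᵥ u) :=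
    fun O => measurable_pi_lambda _ fun i => mdp (O i)
  have L1 : ∀ O : Matrix (Fin n) (Fin n) ℝ, O * Oᵀ = 1 →
      ∀ G : ℝ × (Fin n → ℝ) → ℝ, Measurable G →
      ∫ ω, G (R ω, O *ᵥ U ω) ∂P = ∫ ω, G (R ω, U ω) ∂P := by
    intro O hO G hG
    have hOU : Measurable fun ω => O *ᵥ U ω := (hMulVecM O).comp hU
    have h1 : IndepFun R (fun ω => O *ᵥ U ω) P := hindep.comp measurable_id (hMulVecM O)
    have e1 := (indepFun_iff_map_prod_eq_prod_map_map hR.aemeasurable hOU.aemeasurable).mp h1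
    have e2 := (indepFun_iff_map_prod_eq_prod_map_map hR.aemeasurable hU.aemeasurable).mp hindep
    have key : Measure.map (fun ω => (R ω, O *ᵥ U ω)) P = Measure.map (fun ω => (R ω, U ω)) P := by
      rw [e1, e2, hUrot O hO]
    calc ∫ ω, G (R ω, O *ᵥ U ω) ∂P
        = ∫ x, G x ∂(Measure.map (fun ω => (R ω, O *ᵥ U ω)) P) :=
          (integral_map (hR.prodMk hOU).aemeasurable hG.aestronglyMeasurable).symm
      _ = ∫ x, G x ∂(Measure.map (fun ω => (R ω, U ω)) P) := by rw [key]
      _ = _ := integral_map (hR.prodMk hU).aemeasurable hG.aestronglyMeasurable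
  have L2 : ∀ O : Matrix (Fin n) (Fin n) ℝ, O * Oᵀ = 1 → Oᵀ *ᵥ w = w →
      ∀ G : ℝ × (Fin n → ℝ) → ℝ, Measurable G →
      ∫ ω, G (R ω, O *ᵥ U ω) ∂Q = ∫ ω, G (R ω, U ω) ∂Q := by
    intro O hO hOw G hG
    set F : ℝ × (Fin n → ℝ) → ℝ :=
      fun x => Set.indicator B₁ (fun _ => (1:ℝ)) (a ⬝ᵥ μv + x.1 * (w ⬝ᵥ x.2)) * G x with hF
    have hFm : Measurable F :=
      ((measurable_const.indicator hB₁).comp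
        (measurable_const.add (measurable_fst.mul ((mdp w).comp measurable_snd)))).mul hG
    have hwOU : ∀ u, w ⬝ᵥ (O *ᵥ u) = w ⬝ᵥ u := by
      intro u
      rw [Matrix.dotProduct_mulVec, ← Matrix.mulVec_transpose, hOw]
    have key1 : ∀ ω, Set.indicator B (fun ω' => G (R ω', U ω')) ω = F (R ω, U ω) := by
      intro ω
      by_cases hωB : ω ∈ B
      · have hY1 : Y ω ∈ B₁ := by rw [hB] at hωB; exact hωB
        rw [Set.indicator_of_mem hωB, hF]
        simp only []
        rw [← hYeq ω, Set.indicator_of_mem hY1, one_mul]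
      · have hY1 : Y ω ∉ B₁ := by rw [hB] at hωB; exact hωB
        rw [Set.indicator_of_notMem hωB, hF]
        simp only []
        rw [← hYeq ω, Set.indicator_of_notMem hY1, zero_mul]
    have key2 : ∀ ω, Set.indicator B (fun ω' => G (R ω', O *ᵥ U ω')) ω = F (R ω, O *ᵥ U ω) := by
      intro ω
      by_cases hωB : ω ∈ B
      · have hY1 : Y ω ∈ B₁ := by rw [hB] at hωB; exact hωB
        rw [Set.indicator_of_mem hωB, hF]
        simp only []
        rw [hwOU, ← hYeq ω, Set.indicator_of_mem hY1, one_mul]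
      · have hY1 : Y ω ∉ B₁ := by rw [hB] at hωB; exact hωB
        rw [Set.indicator_of_notMem hωB, hF]
        simp only []
        rw [hwOU, ← hYeq ω, Set.indicator_of_notMem hY1, zero_mul]
    rw [hQint, hQint]
    congr 1
    calc ∫ ω, Set.indicator B (fun ω' => G (R ω', O *ᵥ U ω')) ω ∂P
        = ∫ ω, F (R ω, O *ᵥ U ω) ∂P := by
          exact integral_congr_ae (Filter.Eventually.of_forall key2)
      _ = ∫ ω, F (R ω, U ω) ∂P := L1 O hO F hFm
      _ = ∫ ω, Set.indicator B (fun ω' => G (R ω', U ω')) ω ∂P :=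
          (integral_congr_ae (Filter.Eventually.of_forall key1)).symm
  -- reflection lemma
  have hHouse : ∀ p : Fin n → ℝ, p ≠ 0 → p ⬝ᵥ w = 0 →
      ∀ G : ℝ × (Fin n → ℝ) → ℝ, Measurable G →
      ∫ ω, G (R ω, U ω - ((2 / (p ⬝ᵥ p)) * (p ⬝ᵥ U ω)) • p) ∂Q = ∫ ω, G (R ω, U ω) ∂Q := by
    intro p hp hpw G hG
    have h1 := L2 (house p) (house_mul_self p hp)
      (by rw [house_transpose, house_mulVec]; simp [hpw]) G hG
    simpa only [house_mulVec] using h1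
  have hrefl : ∀ p q : Fin n → ℝ, ∀ u : Fin n → ℝ,
      q ⬝ᵥ (u - ((2 / (p ⬝ᵥ p)) * (p ⬝ᵥ u)) • p)
        = q ⬝ᵥ u - 2 / (p ⬝ᵥ p) * (p ⬝ᵥ u) * (q ⬝ᵥ p) := by
    intro p q u
    simp [dotProduct_sub, dotProduct_smul, smul_eq_mul]
  have M1 : ∀ p : Fin n → ℝ, p ⬝ᵥ w = 0 → psi Q R U p = 0 := by
    intro p hpw
    by_cases hp : p = 0
    · simp [psi, hp]
    · have hpp : p ⬝ᵥ p ≠ 0 := ne_of_gt (dp_pos hp)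
      have h := hHouse p hp hpw (fun x => x.1 * (p ⬝ᵥ x.2))
        (measurable_fst.mul ((mdp p).comp measurable_snd))
      have e : ∀ ω, R ω * (p ⬝ᵥ (U ω - ((2 / (p ⬝ᵥ p)) * (p ⬝ᵥ U ω)) • p))
          = -(R ω * (p ⬝ᵥ U ω)) := by
        intro ω; rw [hrefl]; field_simp; ring
      simp only [e] at h
      rw [integral_neg] at h
      have : psi Q R U p = ∫ ω, R ω * (p ⬝ᵥ U ω) ∂Q := rfl
      rw [this]
      linarith [h]
  have M2 : ∀ p : Fin n → ℝ, p ⬝ᵥ w = 0 → phi Q R U p w = 0 := by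
    intro p hpw
    by_cases hp : p = 0
    · simp [phi, hp]
    · have hpp : p ⬝ᵥ p ≠ 0 := ne_of_gt (dp_pos hp)
      have h := hHouse p hp hpw (fun x => x.1 ^ 2 * ((p ⬝ᵥ x.2) * (w ⬝ᵥ x.2)))
        ((measurable_fst.pow_const 2).mul
          (((mdp p).comp measurable_snd).mul ((mdp w).comp measurable_snd)))
      have e : ∀ ω, R ω ^ 2 * ((p ⬝ᵥ (U ω - ((2 / (p ⬝ᵥ p)) * (p ⬝ᵥ U ω)) • p))
            * (w ⬝ᵥ (U ω - ((2 / (p ⬝ᵥ p)) * (p ⬝ᵥ U ω)) • p)))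
          = -(R ω ^ 2 * ((p ⬝ᵥ U ω) * (w ⬝ᵥ U ω))) := by
        intro ω
        rw [hrefl, hrefl, show w ⬝ᵥ p = 0 from (dotProduct_comm p w) ▸ hpw]
        field_simp; ring
      simp only [e] at h
      rw [integral_neg] at h
      have : phi Q R U p w = ∫ ω, R ω ^ 2 * ((p ⬝ᵥ U ω) * (w ⬝ᵥ U ω)) ∂Q := rfl
      rw [this]
      linarith [h]
  have M3 : ∀ p q : Fin n → ℝ, p ⬝ᵥ w = 0 → q ⬝ᵥ w = 0 → q ⬝ᵥ p = 0 → phi Q R U p q = 0 := by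
    intro p q hpw hqw hqp
    by_cases hp : p = 0
    · simp [phi, hp]
    · have hpp : p ⬝ᵥ p ≠ 0 := ne_of_gt (dp_pos hp)
      have h := hHouse p hp hpw (fun x => x.1 ^ 2 * ((p ⬝ᵥ x.2) * (q ⬝ᵥ x.2)))
        ((measurable_fst.pow_const 2).mul
          (((mdp p).comp measurable_snd).mul ((mdp q).comp measurable_snd)))
      have e : ∀ ω, R ω ^ 2 * ((p ⬝ᵥ (U ω - ((2 / (p ⬝ᵥ p)) * (p ⬝ᵥ U ω)) • p))
            * (q ⬝ᵥ (U ω - ((2 / (p ⬝ᵥ p)) * (p ⬝ᵥ U ω)) • p)))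
          = -(R ω ^ 2 * ((p ⬝ᵥ U ω) * (q ⬝ᵥ U ω))) := by
        intro ω
        rw [hrefl, hrefl, hqp]
        field_simp; ring
      simp only [e] at h
      rw [integral_neg] at h
      have : phi Q R U p q = ∫ ω, R ω ^ 2 * ((p ⬝ᵥ U ω) * (q ⬝ᵥ U ω)) ∂Q := rfl
      rw [this]
      linarith [h]
  have M4 : ∀ p q : Fin n → ℝ, p ⬝ᵥ w = 0 → q ⬝ᵥ w = 0 → p ⬝ᵥ p = q ⬝ᵥ q →
      phi Q R U p p = phi Q R U q q := by
    intro p q hpw hqw hnorm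
    by_cases hpq : p = q
    · rw [hpq]
    · set v : Fin n → ℝ := p - q with hvdef
      have hv : v ≠ 0 := sub_ne_zero.mpr hpq
      have hvv : 0 < v ⬝ᵥ v := dp_pos hv
      have hvw : v ⬝ᵥ w = 0 := by
        rw [hvdef, sub_dotProduct, hpw, hqw, sub_zero]
      have hpv : p ⬝ᵥ v = p ⬝ᵥ p - p ⬝ᵥ q := by
        rw [hvdef, dotProduct_sub]
      have hvv2 : v ⬝ᵥ v = 2 * (p ⬝ᵥ p - p ⬝ᵥ q) := by
        rw [hvdef, sub_dotProduct, dotProduct_sub, dotProduct_sub,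
          dotProduct_comm q p, ← hnorm]
        ring
      have hne : p ⬝ᵥ p - p ⬝ᵥ q ≠ 0 := by
        intro h0; rw [hvv2, h0] at hvv; simp at hvv
      have h := hHouse v hv hvw (fun x => x.1 ^ 2 * ((p ⬝ᵥ x.2) * (p ⬝ᵥ x.2)))
        ((measurable_fst.pow_const 2).mul
          (((mdp p).comp measurable_snd).mul ((mdp p).comp measurable_snd)))
      have e : ∀ ω, R ω ^ 2 * ((p ⬝ᵥ (U ω - ((2 / (v ⬝ᵥ v)) * (v ⬝ᵥ U ω)) • v))
            * (p ⬝ᵥ (U ω - ((2 / (v ⬝ᵥ v)) * (v ⬝ᵥ U ω)) • v)))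
          = R ω ^ 2 * ((q ⬝ᵥ U ω) * (q ⬝ᵥ U ω)) := by
        intro ω
        have hq : p ⬝ᵥ (U ω - ((2 / (v ⬝ᵥ v)) * (v ⬝ᵥ U ω)) • v) = q ⬝ᵥ U ω := by
          rw [hrefl, hpv, hvv2,
            show v ⬝ᵥ U ω = p ⬝ᵥ U ω - q ⬝ᵥ U ω by rw [hvdef, sub_dotProduct]]
          field_simp
          ring
        rw [hq]
      simp only [e] at h
      exact h.symm
  -- choose a nonzero vector orthogonal to w
  have hu0 : ∃ u₀ : Fin n → ℝ, u₀ ≠ 0 ∧ u₀ ⬝ᵥ w = 0 := by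
    obtain ⟨jj, hjj⟩ := Function.ne_iff.mp hwne
    simp only [Pi.zero_apply] at hjj
    have h0n : 0 < n := by omega
    have h1n : 1 < n := by omega
    set k0 : Fin n := ⟨0, h0n⟩
    set k1 : Fin n := ⟨1, h1n⟩
    set k : Fin n := if jj = k0 then k1 else k0 with hkdef
    have hkjj : jj ≠ k := by
      rw [hkdef]
      by_cases hc : jj = k0
      · rw [if_pos hc, hc]; intro hcon; exact absurd (congrArg Fin.val hcon) (by simp [k0, k1])
      · rw [if_neg hc]; exact hc
    refine ⟨(w ⬝ᵥ w) • (Pi.single k 1 : Fin n → ℝ) - (w k) • w, ?_, ?_⟩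
    · intro hcon
      by_cases hwk : w k = 0
      · have h5 := congrFun hcon k
        simp only [Pi.sub_apply, Pi.smul_apply, Pi.single_eq_same, smul_eq_mul, mul_one,
          hwk, zero_mul, sub_zero, Pi.zero_apply] at h5
        exact (ne_of_gt (dp_pos hwne)) h5
      · have h5 := congrFun hcon jj
        simp only [Pi.sub_apply, Pi.smul_apply, smul_eq_mul, Pi.zero_apply,
          Pi.single_eq_of_ne hkjj, mul_zero] at h5
        have h6 : w k * w jj = 0 := by linarith
        rcases mul_eq_zero.mp h6 with h | h
        · exact hwk h
        · exact hjj h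
    · rw [sub_dotProduct, smul_dotProduct, smul_dotProduct,
        single_dotProduct]
      simp only [smul_eq_mul]
      rw [dotProduct_comm w w]
      ring
  obtain ⟨u₀, hu0ne, hu0w⟩ := hu0
  have hu0p : (0:ℝ) < u₀ ⬝ᵥ u₀ := dp_pos hu0ne
  set c : ℝ := phi Q R U u₀ u₀ / (u₀ ⬝ᵥ u₀) with hcdef
  -- homogeneity of phi on the diagonal
  have hphi_smul : ∀ (t : ℝ) (p : Fin n → ℝ),
      phi Q R U (t • p) (t • p) = t ^ 2 * phi Q R U p p := by
    intro t p
    have e : (fun ω => R ω ^ 2 * (((t • p) ⬝ᵥ U ω) * ((t • p) ⬝ᵥ U ω)))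
        = fun ω => t ^ 2 * (R ω ^ 2 * ((p ⬝ᵥ U ω) * (p ⬝ᵥ U ω))) := by
      funext ω
      rw [smul_dotProduct]
      simp only [smul_eq_mul]
      ring
    show (∫ ω, R ω ^ 2 * (((t • p) ⬝ᵥ U ω) * ((t • p) ⬝ᵥ U ω)) ∂Q) = _
    rw [e, integral_const_mul]
    rfl
  -- diagonal values
  have hphi_pp : ∀ p : Fin n → ℝ, p ⬝ᵥ w = 0 → phi Q R U p p = (p ⬝ᵥ p) * c := by
    intro p hpw
    by_cases hp : p = 0
    · simp [phi, hp]
    · have hppos := dp_pos hp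
      have h4 := M4 (Real.sqrt (u₀ ⬝ᵥ u₀) • p) (Real.sqrt (p ⬝ᵥ p) • u₀)
        (by rw [smul_dotProduct, hpw, smul_zero])
        (by rw [smul_dotProduct, hu0w, smul_zero])
        (by
          rw [smul_dotProduct, dotProduct_smul, smul_dotProduct,
            dotProduct_smul]
          simp only [smul_eq_mul]
          have e1 : Real.sqrt (u₀ ⬝ᵥ u₀) * Real.sqrt (u₀ ⬝ᵥ u₀) = u₀ ⬝ᵥ u₀ :=
            Real.mul_self_sqrt (le_of_lt hu0p)
          have e2 : Real.sqrt (p ⬝ᵥ p) * Real.sqrt (p ⬝ᵥ p) = p ⬝ᵥ p :=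
            Real.mul_self_sqrt (le_of_lt hppos)
          linear_combination (p ⬝ᵥ p) * e1 - (u₀ ⬝ᵥ u₀) * e2)
      rw [hphi_smul, hphi_smul, Real.sq_sqrt (le_of_lt hu0p), Real.sq_sqrt (le_of_lt hppos)]
        at h4
      rw [hcdef]
      field_simp
      linarith [h4]
  -- off-diagonal values for vectors orthogonal to w
  have hphi_perp : ∀ p q : Fin n → ℝ, p ⬝ᵥ w = 0 → q ⬝ᵥ w = 0 →
      phi Q R U p q = (p ⬝ᵥ q) * c := by
    intro p q hpw hqw
    by_cases hp : p = 0
    · simp [phi, hp]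
    · have hppos := dp_pos hp
      have hppne := ne_of_gt hppos
      set lam : ℝ := (p ⬝ᵥ q) / (p ⬝ᵥ p) with hlamdef
      set q2 : Fin n → ℝ := q - lam • p with hq2def
      have hq2p : q2 ⬝ᵥ p = 0 := by
        rw [hq2def, sub_dotProduct, smul_dotProduct, smul_eq_mul, hlamdef,
          dotProduct_comm q p]
        field_simp
        ring
      have hq2w : q2 ⬝ᵥ w = 0 := by
        rw [hq2def, sub_dotProduct, smul_dotProduct, hpw, hqw]
        simp
      have hsplit : ∀ u, q ⬝ᵥ u = lam * (p ⬝ᵥ u) + q2 ⬝ᵥ u := by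
        intro u
        rw [hq2def, sub_dotProduct, smul_dotProduct, smul_eq_mul]
        ring
      have hstep : phi Q R U p q = lam * phi Q R U p p + phi Q R U p q2 := by
        have e : (fun ω => R ω ^ 2 * ((p ⬝ᵥ U ω) * (q ⬝ᵥ U ω)))
            = fun ω => lam * (R ω ^ 2 * ((p ⬝ᵥ U ω) * (p ⬝ᵥ U ω)))
              + R ω ^ 2 * ((p ⬝ᵥ U ω) * (q2 ⬝ᵥ U ω)) := by
          funext ω; rw [hsplit]; ring
        show (∫ ω, R ω ^ 2 * ((p ⬝ᵥ U ω) * (q ⬝ᵥ U ω)) ∂Q) = _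
        rw [e, integral_add ((hIq p p).const_mul lam) (hIq p q2), integral_const_mul]
        rfl
      rw [hstep, M3 p q2 hpw hq2w hq2p, hphi_pp p hpw, add_zero, hlamdef]
      field_simp
  -- full formulas
  have hpsi_full : ∀ p : Fin n → ℝ, psi Q R U p = ((p ⬝ᵥ w) / ahat) * psi Q R U w := by
    intro p
    set lam : ℝ := (p ⬝ᵥ w) / ahat with hlamdef
    set p2 : Fin n → ℝ := p - lam • w with hp2def
    have hp2w : p2 ⬝ᵥ w = 0 := by
      rw [hp2def, sub_dotProduct, smul_dotProduct, smul_eq_mul, hlamdef, ← hwd]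
      field_simp
      ring
    have hsplit : ∀ u, p ⬝ᵥ u = lam * (w ⬝ᵥ u) + p2 ⬝ᵥ u := by
      intro u
      rw [hp2def, sub_dotProduct, smul_dotProduct, smul_eq_mul]
      ring
    have hstep : psi Q R U p = lam * psi Q R U w + psi Q R U p2 := by
      have e : (fun ω => R ω * (p ⬝ᵥ U ω))
          = fun ω => lam * (R ω * (w ⬝ᵥ U ω)) + R ω * (p2 ⬝ᵥ U ω) := by
        funext ω; rw [hsplit]; ring
      show (∫ ω, R ω * (p ⬝ᵥ U ω) ∂Q) = _
      rw [e, integral_add ((hIp w).const_mul lam) (hIp p2), integral_const_mul]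
      rfl
    rw [hstep, M1 p2 hp2w, add_zero]
  have hphi_full : ∀ p q : Fin n → ℝ,
      phi Q R U p q = ((p ⬝ᵥ w) / ahat) * ((q ⬝ᵥ w) / ahat) * phi Q R U w w
        + (p ⬝ᵥ q - (p ⬝ᵥ w) * (q ⬝ᵥ w) / ahat) * c := by
    intro p q
    set lp : ℝ := (p ⬝ᵥ w) / ahat with hlpdef
    set lq : ℝ := (q ⬝ᵥ w) / ahat with hlqdef
    set p2 : Fin n → ℝ := p - lp • w with hp2def
    set q2 : Fin n → ℝ := q - lq • w with hq2def
    have hp2w : p2 ⬝ᵥ w = 0 := by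
      rw [hp2def, sub_dotProduct, smul_dotProduct, smul_eq_mul, hlpdef, ← hwd]
      field_simp
      ring
    have hq2w : q2 ⬝ᵥ w = 0 := by
      rw [hq2def, sub_dotProduct, smul_dotProduct, smul_eq_mul, hlqdef, ← hwd]
      field_simp
      ring
    have hsplitp : ∀ u, p ⬝ᵥ u = lp * (w ⬝ᵥ u) + p2 ⬝ᵥ u := by
      intro u
      rw [hp2def, sub_dotProduct, smul_dotProduct, smul_eq_mul]; ring
    have hsplitq : ∀ u, q ⬝ᵥ u = lq * (w ⬝ᵥ u) + q2 ⬝ᵥ u := by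
      intro u
      rw [hq2def, sub_dotProduct, smul_dotProduct, smul_eq_mul]; ring
    have hstep : phi Q R U p q = (lp * lq) * phi Q R U w w
        + (lp * phi Q R U q2 w + (lq * phi Q R U p2 w + phi Q R U p2 q2)) := by
      have e : (fun ω => R ω ^ 2 * ((p ⬝ᵥ U ω) * (q ⬝ᵥ U ω)))
          = fun ω => (lp * lq) * (R ω ^ 2 * ((w ⬝ᵥ U ω) * (w ⬝ᵥ U ω)))
            + (lp * (R ω ^ 2 * ((q2 ⬝ᵥ U ω) * (w ⬝ᵥ U ω)))
              + (lq * (R ω ^ 2 * ((p2 ⬝ᵥ U ω) * (w ⬝ᵥ U ω)))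
                + R ω ^ 2 * ((p2 ⬝ᵥ U ω) * (q2 ⬝ᵥ U ω)))) := by
        funext ω; rw [hsplitp, hsplitq]; ring
      have I1 : Integrable (fun ω => (lp * lq) * (R ω ^ 2 * ((w ⬝ᵥ U ω) * (w ⬝ᵥ U ω)))) Q :=
        (hIq w w).const_mul _
      have I2 : Integrable (fun ω => lp * (R ω ^ 2 * ((q2 ⬝ᵥ U ω) * (w ⬝ᵥ U ω)))) Q :=
        (hIq q2 w).const_mul _
      have I3 : Integrable (fun ω => lq * (R ω ^ 2 * ((p2 ⬝ᵥ U ω) * (w ⬝ᵥ U ω)))) Q :=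
        (hIq p2 w).const_mul _
      have I4 : Integrable (fun ω => R ω ^ 2 * ((p2 ⬝ᵥ U ω) * (q2 ⬝ᵥ U ω))) Q := hIq p2 q2
      have I34 : Integrable (fun ω => lq * (R ω ^ 2 * ((p2 ⬝ᵥ U ω) * (w ⬝ᵥ U ω)))
          + R ω ^ 2 * ((p2 ⬝ᵥ U ω) * (q2 ⬝ᵥ U ω))) Q := I3.add I4
      have I234 : Integrable (fun ω => lp * (R ω ^ 2 * ((q2 ⬝ᵥ U ω) * (w ⬝ᵥ U ω)))
          + (lq * (R ω ^ 2 * ((p2 ⬝ᵥ U ω) * (w ⬝ᵥ U ω)))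
            + R ω ^ 2 * ((p2 ⬝ᵥ U ω) * (q2 ⬝ᵥ U ω)))) Q := I2.add I34
      show (∫ ω, R ω ^ 2 * ((p ⬝ᵥ U ω) * (q ⬝ᵥ U ω)) ∂Q) = _
      rw [e, integral_add I1 I234, integral_add I2 I34, integral_add I3 I4,
        integral_const_mul, integral_const_mul, integral_const_mul]
      rfl
    have hp2q2 : p2 ⬝ᵥ q2 = p ⬝ᵥ q - (p ⬝ᵥ w) * (q ⬝ᵥ w) / ahat := by
      rw [hp2def, hq2def, sub_dotProduct, dotProduct_sub, dotProduct_sub,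
        smul_dotProduct, dotProduct_smul, dotProduct_smul,
        smul_dotProduct]
      simp only [smul_eq_mul]
      rw [hlpdef, hlqdef, dotProduct_comm w q, ← hwd]
      field_simp
      ring
    rw [hstep, M2 q2 hq2w, M2 p2 hp2w, hphi_perp p2 q2 hp2w hq2w, hp2q2]
    ring
  -- trace identity
  have htr1 : ∀ kk : Fin n, phi Q R U (Pi.single kk 1) (Pi.single kk 1)
      = (w kk / ahat) * (w kk / ahat) * phi Q R U w w + (1 - w kk * w kk / ahat) * c := by
    intro kk
    rw [hphi_full]
    simp [single_dotProduct, Pi.single_eq_same]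
  have htr2 : (∑ kk, phi Q R U (Pi.single kk 1) (Pi.single kk 1)) = ∫ ω, R ω ^ 2 ∂Q := by
    show (∑ kk, ∫ ω, R ω ^ 2 * (((Pi.single kk 1 : Fin n → ℝ) ⬝ᵥ U ω)
      * ((Pi.single kk 1 : Fin n → ℝ) ⬝ᵥ U ω)) ∂Q) = _
    rw [← integral_finset_sum Finset.univ (fun kk _ => hIq (Pi.single kk 1) (Pi.single kk 1))]
    refine integral_congr_ae ?_
    filter_upwards [hUQ] with ω hω
    simp only [single_dotProduct, one_mul]
    rw [← Finset.mul_sum,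
      show (∑ kk, U ω kk * U ω kk) = 1 from by
        rw [← hω]; exact Finset.sum_congr rfl fun k _ => by ring,
      mul_one]
  have hsw : (∑ kk, w kk * w kk) = ahat := by rw [hwd]; rfl
  have htr3 : ∫ ω, R ω ^ 2 ∂Q = phi Q R U w w / ahat + ((n:ℝ) - 1) * c := by
    rw [← htr2, Finset.sum_congr rfl (fun kk _ => htr1 kk), Finset.sum_add_distrib]
    have t1 : ∀ kk : Fin n, (w kk / ahat) * (w kk / ahat) * phi Q R U w w
        = (phi Q R U w w / (ahat * ahat)) * (w kk * w kk) := by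
      intro kk; field_simp; try ring
    have t2 : ∀ kk : Fin n, (1 - w kk * w kk / ahat) * c = c - (c / ahat) * (w kk * w kk) := by
      intro kk; field_simp; try ring
    have e1 : (∑ kk, (w kk / ahat) * (w kk / ahat) * phi Q R U w w)
        = phi Q R U w w / ahat := by
      rw [Finset.sum_congr rfl (fun kk _ => t1 kk), ← Finset.mul_sum, hsw]
      field_simp
      try ring
    have e2 : (∑ kk, (1 - w kk * w kk / ahat) * c) = ((n:ℝ) - 1) * c := by
      rw [Finset.sum_congr rfl (fun kk _ => t2 kk),
        Finset.sum_sub_distrib, ← Finset.mul_sum, hsw, Finset.sum_const, Finset.card_univ,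
        Fintype.card_fin, nsmul_eq_mul]
      field_simp
      try ring
    rw [e1, e2]
  -- kB = c
  have hn1 : ((n:ℝ) - 1) ≠ 0 := by
    have h2n : (2:ℝ) ≤ (n:ℝ) := by exact_mod_cast hn
    intro hcon; linarith
  have hR2Q : condE P B (fun ω => R ω ^ 2) = ∫ ω, R ω ^ 2 ∂Q := by
    show (∫ ω, R ω ^ 2 ∂(P[|B])) = _
    rw [← hQdef]
  have hphiY : condE P B (fun ω => (Y ω - a ⬝ᵥ μv) ^ 2) = phi Q R U w w := by
    show (∫ ω, (Y ω - a ⬝ᵥ μv) ^ 2 ∂(P[|B]))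
      = ∫ ω, R ω ^ 2 * ((w ⬝ᵥ U ω) * (w ⬝ᵥ U ω)) ∂Q
    rw [← hQdef]
    refine integral_congr_ae (Filter.Eventually.of_forall fun ω => ?_)
    show (Y ω - a ⬝ᵥ μv) ^ 2 = R ω ^ 2 * (w ⬝ᵥ U ω * w ⬝ᵥ U ω)
    rw [hYeq ω]; ring
  have hcc : kB = c := by
    rw [hkB, hR2Q, hphiY, htr3]
    field_simp
    try ring
  -- conditional mean and variance of Y
  have hEY : condE P B Y = a ⬝ᵥ μv + psi Q R U w := by
    show (∫ ω, Y ω ∂(P[|B])) = _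
    rw [← hQdef, show Y = fun ω => a ⬝ᵥ μv + R ω * (w ⬝ᵥ U ω) from funext hYeq,
      integral_add (integrable_const _) (hIp w), integral_const,
      show (∫ ω, R ω * (w ⬝ᵥ U ω) ∂Q) = psi Q R U w from rfl]
    simp [measure_univ]
  have hVarY : condVar P B Y = phi Q R U w w - (psi Q R U w) ^ 2 := by
    show (∫ ω, (Y ω - condE P B Y) ^ 2 ∂(P[|B])) = _
    rw [← hQdef, hEY]
    have e : (fun ω => (Y ω - (a ⬝ᵥ μv + psi Q R U w)) ^ 2)
        = fun ω => R ω ^ 2 * ((w ⬝ᵥ U ω) * (w ⬝ᵥ U ω))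
          - (2 * psi Q R U w) * (R ω * (w ⬝ᵥ U ω)) + psi Q R U w * psi Q R U w := by
      funext ω; rw [hYeq ω]; ring
    have I1 : Integrable (fun ω => R ω ^ 2 * ((w ⬝ᵥ U ω) * (w ⬝ᵥ U ω))
        - (2 * psi Q R U w) * (R ω * (w ⬝ᵥ U ω))) Q := (hIq w w).sub ((hIp w).const_mul _)
    rw [e, integral_add I1 (integrable_const _),
      integral_sub (hIq w w) ((hIp w).const_mul _), integral_const_mul, integral_const,
      show (∫ ω, R ω ^ 2 * ((w ⬝ᵥ U ω) * (w ⬝ᵥ U ω)) ∂Q) = phi Q R U w w from rfl,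
      show (∫ ω, R ω * (w ⬝ᵥ U ω) ∂Q) = psi Q R U w from rfl]
    simp [measure_univ]
    ring
  -- conditional mean of the coordinates
  have hEX : ∀ i0 : Fin n, condE P B (fun ω => X ω i0)
      = μv i0 + psi Q R U (fun k => A i0 k) := by
    intro i0
    show (∫ ω, X ω i0 ∂(P[|B])) = _
    have eX : (fun ω => X ω i0) = fun ω => μv i0 + R ω * ((fun k => A i0 k) ⬝ᵥ U ω) := by
      funext ω; simp only [hX]; rfl
    rw [← hQdef, eX, integral_add (integrable_const _) (hIp _), integral_const,
      show (∫ ω, R ω * ((fun k => A i0 k) ⬝ᵥ U ω) ∂Q) = psi Q R U (fun k => A i0 k) from rfl]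
    simp [measure_univ]
  -- conditional covariance expansion
  have hCov : condCov P B (fun ω => X ω i) (fun ω => X ω j)
      = phi Q R U (fun k => A i k) (fun k => A j k)
        - psi Q R U (fun k => A i k) * psi Q R U (fun k => A j k) := by
    show (∫ ω, (X ω i - condE P B (fun ω => X ω i)) * (X ω j - condE P B (fun ω => X ω j))
      ∂(P[|B])) = _
    rw [← hQdef, hEX i, hEX j]
    have exi : ∀ ω, X ω i = μv i + R ω * ((fun k => A i k) ⬝ᵥ U ω) := by
      intro ω; simp only [hX]; rfl
    have exj : ∀ ω, X ω j = μv j + R ω * ((fun k => A j k) ⬝ᵥ U ω) := by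
      intro ω; simp only [hX]; rfl
    have e : (fun ω => (X ω i - (μv i + psi Q R U (fun k => A i k)))
          * (X ω j - (μv j + psi Q R U (fun k => A j k))))
        = fun ω => R ω ^ 2 * (((fun k => A i k) ⬝ᵥ U ω) * ((fun k => A j k) ⬝ᵥ U ω))
          - psi Q R U (fun k => A j k) * (R ω * ((fun k => A i k) ⬝ᵥ U ω))
          - psi Q R U (fun k => A i k) * (R ω * ((fun k => A j k) ⬝ᵥ U ω))
          + psi Q R U (fun k => A i k) * psi Q R U (fun k => A j k) := by
      funext ω; rw [exi ω, exj ω]; ring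
    have I1 : Integrable (fun ω =>
        R ω ^ 2 * (((fun k => A i k) ⬝ᵥ U ω) * ((fun k => A j k) ⬝ᵥ U ω))
          - psi Q R U (fun k => A j k) * (R ω * ((fun k => A i k) ⬝ᵥ U ω))) Q :=
      (hIq _ _).sub ((hIp _).const_mul _)
    have I2 : Integrable (fun ω =>
        R ω ^ 2 * (((fun k => A i k) ⬝ᵥ U ω) * ((fun k => A j k) ⬝ᵥ U ω))
          - psi Q R U (fun k => A j k) * (R ω * ((fun k => A i k) ⬝ᵥ U ω))
          - psi Q R U (fun k => A i k) * (R ω * ((fun k => A j k) ⬝ᵥ U ω))) Q :=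
      I1.sub ((hIp _).const_mul _)
    rw [e, integral_add I2 (integrable_const _), integral_sub I1 ((hIp _).const_mul _),
      integral_sub (hIq _ _) ((hIp _).const_mul _), integral_const_mul, integral_const_mul,
      integral_const,
      show (∫ ω, R ω ^ 2 * (((fun k => A i k) ⬝ᵥ U ω) * ((fun k => A j k) ⬝ᵥ U ω)) ∂Q)
        = phi Q R U (fun k => A i k) (fun k => A j k) from rfl,
      show (∫ ω, R ω * ((fun k => A i k) ⬝ᵥ U ω) ∂Q) = psi Q R U (fun k => A i k) from rfl,
      show (∫ ω, R ω * ((fun k => A j k) ⬝ᵥ U ω) ∂Q) = psi Q R U (fun k => A j k) from rfl]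
    simp [measure_univ]
    ring
  -- final assembly
  rw [hCov, hphi_full, hpsi_full (fun k => A i k), hpsi_full (fun k => A j k),
    hrow_w i, hrow_w j, hrow_dot i j, hcc, hVarY]
  field_simp
  ring
end

section
/- Let n ≥ 2 and let X = μ + R•(A *ᵥ U) be an elliptically distributed random vector with benchmark Y = a ⬝ᵥ X. For every Borel set B₁ ⊆ ℝ such that the event B := {Y ∈ B₁} has P[B] > 0, the vector of conditional covariances of the coordinates of X with Y satisfies Cov_B[X, Y] = Var_B[Y] • β, i.e. Cov_B[X_i, Y] = Var_B[Y]·β_i for every i. -/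
open MeasureTheory ProbabilityTheory Matrix

/-- L²·L² is integrable, by polarization. -/
lemma memLp_two_integrable_mul {Ω : Type*} [MeasurableSpace Ω] {P : Measure Ω}
    {f g : Ω → ℝ} (hf : MemLp f 2 P) (hg : MemLp g 2 P) :
    Integrable (fun ω => f ω * g ω) P := by
  have h := (((hf.add hg).integrable_sq.sub hf.integrable_sq).sub hg.integrable_sq).div_const 2
  have heq : (fun ω => f ω * g ω)
      = fun ω => (((f ω + g ω) ^ 2 - f ω ^ 2) - g ω ^ 2) / 2 := by
    funext ω; ring
  rw [heq]; exact h

lemma meas_dot {α : Type*} [MeasurableSpace α] {n : ℕ} (v : Fin n → ℝ)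
    {f : α → Fin n → ℝ} (hf : Measurable f) : Measurable fun x => v ⬝ᵥ f x := by
  simp only [dotProduct]
  exact Finset.measurable_sum _ fun j _ => ((measurable_pi_apply j).comp hf).const_mul _

lemma meas_mulVec {α : Type*} [MeasurableSpace α] {n : ℕ} (A : Matrix (Fin n) (Fin n) ℝ)
    {f : α → Fin n → ℝ} (hf : Measurable f) (i : Fin n) :
    Measurable fun x => (A *ᵥ f x) i := by
  simp only [Matrix.mulVec]
  exact meas_dot _ hf

theorem conditional_covariance_with_benchmark
    {Ω : Type*} [MeasurableSpace Ω] (P : Measure Ω) [IsProbabilityMeasure P]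
    (n : ℕ) (hn : 2 ≤ n)
    (R : Ω → ℝ) (U : Ω → Fin n → ℝ) (hR : Measurable R) (hU : Measurable U)
    (hRpos : ∀ᵐ ω ∂P, 0 < R ω)
    (hR2 : ∫ ω, R ω ^ 2 ∂P = (n : ℝ))
    (hRL2 : MemLp R 2 P)
    (hUsphere : ∀ᵐ ω ∂P, ∑ i, U ω i ^ 2 = 1)
    (hUrot : ∀ O : Matrix (Fin n) (Fin n) ℝ, O * Oᵀ = 1 →
      Measure.map (fun ω => O *ᵥ U ω) P = Measure.map U P)
    (hindep : IndepFun R U P)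
    (μv : Fin n → ℝ) (A : Matrix (Fin n) (Fin n) ℝ) (hA : IsUnit A.det)
    (a : Fin n → ℝ) (ha : a ≠ 0)
    (X : Ω → Fin n → ℝ) (hX : X = fun ω => μv + R ω • (A *ᵥ U ω))
    (Y : Ω → ℝ) (hY : Y = fun ω => a ⬝ᵥ X ω)
    (hXL2 : ∀ i, MemLp (fun ω => X ω i) 2 P)
    (S : Matrix (Fin n) (Fin n) ℝ) (hS : S = A * Aᵀ)
    (ahat : ℝ) (hahat : ahat = a ⬝ᵥ (S *ᵥ a))
    (β : Fin n → ℝ) (hβ : β = (1 / ahat) • (S *ᵥ a))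
    (B₁ : Set ℝ) (hB₁ : MeasurableSet B₁)
    (B : Set Ω) (hB : B = Y ⁻¹' B₁) (hBpos : 0 < P B) :
    ∀ i, condCov P B (fun ω => X ω i) Y = condVar P B Y * β i := by
  -- Notation
  set v' : Fin n → ℝ := Aᵀ *ᵥ a with hv'
  set s : ℝ := v' ⬝ᵥ v' with hsdef
  set c₀ : ℝ := a ⬝ᵥ μv with hc₀
  -- v' ≠ 0 and s > 0
  have hv'ne : v' ≠ 0 := by
    intro h0
    have hinj : Function.Injective (Aᵀ).mulVec :=
      mulVec_injective_iff_isUnit.2 ((Matrix.isUnit_iff_isUnit_det _).2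
        (by rwa [Matrix.det_transpose]))
    apply ha
    have : Aᵀ *ᵥ a = Aᵀ *ᵥ 0 := by rw [Matrix.mulVec_zero]; exact h0
    exact hinj this
  have hs : 0 < s := by
    obtain ⟨j, hj⟩ := Function.ne_iff.1 hv'ne
    rw [hsdef]
    have : (0:ℝ) < v' j * v' j := mul_self_pos.2 hj
    exact Finset.sum_pos' (fun k _ => mul_self_nonneg _) ⟨j, Finset.mem_univ j, this⟩
  have hsne : s ≠ 0 := ne_of_gt hs
  -- ahat = s, and the β formula
  have hahat_s : ahat = s := by
    rw [hahat, hS, ← Matrix.mulVec_mulVec, Matrix.dotProduct_mulVec, ← Matrix.mulVec_transpose,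
      hsdef]
  have hβi : ∀ i, s * β i = (A *ᵥ v') i := by
    intro i
    rw [hβ, hahat_s, hS]
    have : (A * Aᵀ) *ᵥ a = A *ᵥ v' := by rw [← Matrix.mulVec_mulVec]
    rw [this]
    simp only [Pi.smul_apply, smul_eq_mul]
    field_simp
  -- Formula for Y
  have hYω : ∀ ω, Y ω = c₀ + R ω * (v' ⬝ᵥ U ω) := by
    intro ω
    rw [hY, hX]
    simp only [dotProduct_add]
    congr 1
    rw [show a ⬝ᵥ (R ω • (A *ᵥ U ω)) = R ω * (a ⬝ᵥ (A *ᵥ U ω)) by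
      simp [dotProduct_smul]]
    rw [Matrix.dotProduct_mulVec, ← Matrix.mulVec_transpose]
  -- The residual W
  set W : Ω → Fin n → ℝ := fun ω i => R ω * (A *ᵥ U ω) i - β i * (R ω * (v' ⬝ᵥ U ω)) with hW
  have hXdecomp : ∀ ω i, X ω i = (μv i - β i * c₀) + β i * Y ω + W ω i := by
    intro ω i
    rw [hW, hYω ω, hX]
    simp only [Pi.add_apply, Pi.smul_apply, smul_eq_mul]
    ring
  -- The reflection matrix O
  set M : Matrix (Fin n) (Fin n) ℝ := Matrix.vecMulVec v' v' with hM
  set O : Matrix (Fin n) (Fin n) ℝ := (2 / s) • M - 1 with hOdef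
  have hMM : M * M = s • M := by
    ext i j
    simp only [Matrix.mul_apply, hM, Matrix.vecMulVec_apply, Matrix.smul_apply, smul_eq_mul,
      hsdef, dotProduct]
    rw [Finset.sum_mul]
    exact Finset.sum_congr rfl fun k _ => by ring
  have hMsymm : Mᵀ = M := by
    ext i j; simp [hM, Matrix.transpose_apply, Matrix.vecMulVec_apply, mul_comm]
  have hOT : Oᵀ = O := by
    rw [hOdef, Matrix.transpose_sub, Matrix.transpose_smul, hMsymm, Matrix.transpose_one]
  have hMO : M * O = M := by
    rw [hOdef, Matrix.mul_sub, Matrix.mul_smul, hMM, Matrix.mul_one, smul_smul]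
    rw [show 2 / s * s = 2 by field_simp]
    rw [two_smul]; abel
  have hO : O * Oᵀ = 1 := by
    rw [hOT]
    nth_rewrite 2 [hOdef]
    rw [Matrix.sub_mul, Matrix.smul_mul, hMO, Matrix.one_mul, sub_sub_cancel]
  -- Action of O
  have hMu : ∀ u : Fin n → ℝ, M *ᵥ u = (v' ⬝ᵥ u) • v' := by
    intro u
    funext i
    simp only [hM, Matrix.mulVec, dotProduct, Matrix.vecMulVec_apply, Pi.smul_apply,
      smul_eq_mul]
    rw [Finset.sum_mul]
    exact Finset.sum_congr rfl fun k _ => by ring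
  have hOu : ∀ u : Fin n → ℝ, O *ᵥ u = ((2 / s) * (v' ⬝ᵥ u)) • v' - u := by
    intro u
    rw [hOdef, Matrix.sub_mulVec, Matrix.smul_mulVec, hMu, Matrix.one_mulVec, smul_smul]
  have hv'O : ∀ u : Fin n → ℝ, v' ⬝ᵥ (O *ᵥ u) = v' ⬝ᵥ u := by
    intro u
    rw [hOu, dotProduct_sub, dotProduct_smul, smul_eq_mul, ← hsdef]
    field_simp
    ring
  have hAOu : ∀ u : Fin n → ℝ, A *ᵥ (O *ᵥ u) = ((2 / s) * (v' ⬝ᵥ u)) • (A *ᵥ v') - A *ᵥ u := by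
    intro u
    rw [hOu, Matrix.mulVec_sub, Matrix.mulVec_smul]
  -- Measurability
  have hdotU : Measurable fun ω => v' ⬝ᵥ U ω := meas_dot v' hU
  have hAU : ∀ i, Measurable fun ω => (A *ᵥ U ω) i := fun i => meas_mulVec A hU i
  have hYm : Measurable Y := by
    have : Y = fun ω => c₀ + R ω * (v' ⬝ᵥ U ω) := funext hYω
    rw [this]
    exact measurable_const.add (hR.mul hdotU)
  have hWm : ∀ i, Measurable fun ω => W ω i := by
    intro i
    exact (hR.mul (hAU i)).sub ((hR.mul hdotU).const_mul (β i))
  have hBm : MeasurableSet B := hB ▸ hYm hB₁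
  -- The crux symmetry lemma
  have crux : ∀ g : ℝ × (Fin n → ℝ) → ℝ, Measurable g →
      (∀ r u, g (r, O *ᵥ u) = - g (r, u)) → ∫ ω, g (R ω, U ω) ∂P = 0 := by
    intro g hg hodd
    have hOmap : Measurable fun u : Fin n → ℝ => O *ᵥ u :=
      measurable_pi_iff.2 fun i => meas_mulVec O measurable_id i
    have hOU : Measurable fun ω => O *ᵥ U ω := hOmap.comp hU
    have h1 : IndepFun R (fun ω => O *ᵥ U ω) P := hindep.comp measurable_id hOmap
    have key : Measure.map (fun ω => (R ω, O *ᵥ U ω)) P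
        = Measure.map (fun ω => (R ω, U ω)) P := by
      rw [(indepFun_iff_map_prod_eq_prod_map_map hR.aemeasurable hOU.aemeasurable).1 h1,
        (indepFun_iff_map_prod_eq_prod_map_map hR.aemeasurable hU.aemeasurable).1 hindep,
        hUrot O hO]
    have e1 : ∫ ω, g (R ω, U ω) ∂P = ∫ x, g x ∂(Measure.map (fun ω => (R ω, U ω)) P) :=
      (integral_map (hR.prodMk hU).aemeasurable hg.aestronglyMeasurable).symm
    have e2 : ∫ x, g x ∂(Measure.map (fun ω => (R ω, O *ᵥ U ω)) P)
        = ∫ ω, g (R ω, O *ᵥ U ω) ∂P :=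
      integral_map (hR.prodMk hOU).aemeasurable hg.aestronglyMeasurable
    have e3 : ∫ ω, g (R ω, O *ᵥ U ω) ∂P = - ∫ ω, g (R ω, U ω) ∂P := by
      rw [← integral_neg]
      exact integral_congr_ae (Filter.Eventually.of_forall fun ω => hodd (R ω) (U ω))
    have : ∫ ω, g (R ω, U ω) ∂P = - ∫ ω, g (R ω, U ω) ∂P := by
      calc ∫ ω, g (R ω, U ω) ∂P
          = ∫ x, g x ∂(Measure.map (fun ω => (R ω, U ω)) P) := e1
        _ = ∫ x, g x ∂(Measure.map (fun ω => (R ω, O *ᵥ U ω)) P) := by rw [key]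
        _ = ∫ ω, g (R ω, O *ᵥ U ω) ∂P := e2
        _ = - ∫ ω, g (R ω, U ω) ∂P := e3
    linarith
  -- Vanishing of conditional moments of W against functions of Y
  have vanish : ∀ (F : ℝ → ℝ), Measurable F → ∀ i, ∫ ω, W ω i * F (Y ω) ∂P = 0 := by
    intro F hF i
    set g : ℝ × (Fin n → ℝ) → ℝ := fun p =>
      (p.1 * (A *ᵥ p.2) i - β i * (p.1 * (v' ⬝ᵥ p.2))) * F (c₀ + p.1 * (v' ⬝ᵥ p.2)) with hg
    have hAp : Measurable fun p : ℝ × (Fin n → ℝ) => (A *ᵥ p.2) i :=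
      meas_mulVec A measurable_snd i
    have hvp : Measurable fun p : ℝ × (Fin n → ℝ) => v' ⬝ᵥ p.2 :=
      meas_dot v' measurable_snd
    have hgm : Measurable g := by
      apply Measurable.mul
      · exact (measurable_fst.mul hAp).sub ((measurable_fst.mul hvp).const_mul (β i))
      · exact hF.comp (measurable_const.add (measurable_fst.mul hvp))
    have hodd : ∀ r u, g (r, O *ᵥ u) = - g (r, u) := by
      intro r u
      simp only [hg]
      rw [hv'O u]
      have hb : r * (A *ᵥ (O *ᵥ u)) i - β i * (r * (v' ⬝ᵥ u))
          = - (r * (A *ᵥ u) i - β i * (r * (v' ⬝ᵥ u))) := by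
        rw [hAOu u]
        simp only [Pi.sub_apply, Pi.smul_apply, smul_eq_mul]
        rw [show (A *ᵥ v') i = s * β i from (hβi i).symm]
        field_simp
        ring
      rw [hb, neg_mul]
    have hgeq : ∀ ω, g (R ω, U ω) = W ω i * F (Y ω) := by
      intro ω
      simp only [hg, hW]
      rw [← hYω ω]
    calc ∫ ω, W ω i * F (Y ω) ∂P = ∫ ω, g (R ω, U ω) ∂P :=
          integral_congr_ae (Filter.Eventually.of_forall fun ω => (hgeq ω).symm)
      _ = 0 := crux g hgm hodd
  -- Conditional measure setup
  have hPB0 : P B ≠ 0 := hBpos.ne'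
  haveI hPprob : IsProbabilityMeasure (P[|B]) := cond_isProbabilityMeasure hPB0
  have hint : ∀ {f : Ω → ℝ}, Integrable f P → Integrable f (P[|B]) := by
    intro f hf
    rw [ProbabilityTheory.cond]
    exact (hf.restrict).smul_measure (ENNReal.inv_ne_top.2 hPB0)
  have hcondE_eq : ∀ f : Ω → ℝ, condE P B f = ((P B)⁻¹).toReal * ∫ ω in B, f ω ∂P := by
    intro f
    rw [condE, ProbabilityTheory.cond, integral_smul_measure, smul_eq_mul]
  -- Integrability facts
  have hY2 : MemLp Y 2 P := by
    have : Y = fun ω => ∑ i, a i * X ω i := by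
      rw [hY]; funext ω; simp [dotProduct]
    rw [this]
    exact memLp_finset_sum _ fun i _ => (hXL2 i).const_mul (a i)
  have hW2 : ∀ i, MemLp (fun ω => W ω i) 2 P := by
    intro i
    have : (fun ω => W ω i) = fun ω => (fun ω => X ω i) ω - ((μv i - β i * c₀) + β i * Y ω) := by
      funext ω
      have := hXdecomp ω i
      simp only
      linarith
    rw [this]
    have h1 : MemLp (fun ω => β i * Y ω) 2 P := hY2.const_mul (β i)
    have h2 : MemLp (fun ω => (μv i - β i * c₀) + β i * Y ω) 2 P :=
      (memLp_const (μv i - β i * c₀)).add h1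
    exact (hXL2 i).sub h2
  have hWint : ∀ i, Integrable (fun ω => W ω i) P := fun i => (hW2 i).integrable one_le_two
  have hYint : Integrable Y P := hY2.integrable one_le_two
  have hWYint : ∀ i, Integrable (fun ω => W ω i * Y ω) P :=
    fun i => memLp_two_integrable_mul (hW2 i) hY2
  -- Vanishing of conditional expectations of W and W·Y
  have hindW : ∀ (i : Fin n), ∫ ω in B, W ω i ∂P = 0 := by
    intro i
    rw [← integral_indicator hBm]
    have : B.indicator (fun ω => W ω i) = fun ω => W ω i * B₁.indicator (fun _ => 1) (Y ω) := by
      funext ω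
      by_cases h : Y ω ∈ B₁
      · rw [Set.indicator_of_mem (by rw [hB]; exact h), Set.indicator_of_mem h, mul_one]
      · rw [Set.indicator_of_notMem (by rw [hB]; exact h), Set.indicator_of_notMem h, mul_zero]
    rw [this]
    exact vanish _ (measurable_const.indicator hB₁) i
  have hindWY : ∀ (i : Fin n), ∫ ω in B, W ω i * Y ω ∂P = 0 := by
    intro i
    rw [← integral_indicator hBm]
    have : B.indicator (fun ω => W ω i * Y ω)
        = fun ω => W ω i * B₁.indicator id (Y ω) := by
      funext ω
      by_cases h : Y ω ∈ B₁
      · rw [Set.indicator_of_mem (by rw [hB]; exact h), Set.indicator_of_mem h]; rfl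
      · rw [Set.indicator_of_notMem (by rw [hB]; exact h), Set.indicator_of_notMem h, mul_zero]
    rw [this]
    exact vanish _ (measurable_id.indicator hB₁) i
  have hcW : ∀ i, condE P B (fun ω => W ω i) = 0 := by
    intro i; rw [hcondE_eq, hindW i, mul_zero]
  have hcWY : ∀ i, condE P B (fun ω => W ω i * Y ω) = 0 := by
    intro i; rw [hcondE_eq, hindWY i, mul_zero]
  -- Main computation
  intro i
  -- conditional mean of X i
  have hI1 : Integrable (fun ω => μv i - β i * c₀ + β i * Y ω) (P[|B]) :=
    (integrable_const _).add ((hint hYint).const_mul (β i))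
  have hIW : Integrable (fun ω => W ω i) (P[|B]) := hint (hWint i)
  have hmXi : condE P B (fun ω => X ω i) = (μv i - β i * c₀) + β i * condE P B Y := by
    have heq : (fun ω => X ω i)
        = fun ω => (μv i - β i * c₀ + β i * Y ω) + W ω i := funext fun ω => hXdecomp ω i
    rw [condE, heq]
    rw [integral_add hI1 hIW]
    rw [integral_add (integrable_const _) ((hint hYint).const_mul (β i))]
    rw [integral_const, integral_const_mul]
    have h0 : ∫ ω, W ω i ∂(P[|B]) = 0 := hcW i
    rw [h0, probReal_univ]
    simp [condE]
  -- pointwise identity for the covariance integrand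
  have hpt : ∀ ω, (X ω i - condE P B (fun ω => X ω i)) * (Y ω - condE P B Y)
      = β i * (Y ω - condE P B Y) ^ 2 + (W ω i * Y ω - condE P B Y * W ω i) := by
    intro ω
    rw [hmXi, hXdecomp ω i]
    ring
  have hYmY2int : Integrable (fun ω => (Y ω - condE P B Y) ^ 2) P :=
    (hY2.sub (memLp_const _)).integrable_sq
  -- put it together
  rw [condCov]
  have hstep : condE P B (fun ω => (X ω i - condE P B (fun ω => X ω i)) * (Y ω - condE P B Y))
      = condE P B (fun ω =>
          β i * (Y ω - condE P B Y) ^ 2 + (W ω i * Y ω - condE P B Y * W ω i)) := by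
    rw [condE, condE]
    exact integral_congr_ae (Filter.Eventually.of_forall fun ω => hpt ω)
  rw [hstep, condE]
  have hI2 : Integrable (fun ω => β i * (Y ω - condE P B Y) ^ 2) (P[|B]) :=
    (hint hYmY2int).const_mul (β i)
  have hI3 : Integrable (fun ω => W ω i * Y ω) (P[|B]) := hint (hWYint i)
  have hI4 : Integrable (fun ω => condE P B Y * W ω i) (P[|B]) := hIW.const_mul _
  have hI5 : Integrable (fun ω => W ω i * Y ω - condE P B Y * W ω i) (P[|B]) := hI3.sub hI4
  rw [integral_add hI2 hI5, integral_const_mul, integral_sub hI3 hI4, integral_const_mul]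
  have h1 : ∫ ω, W ω i * Y ω ∂(P[|B]) = 0 := hcWY i
  have h2 : ∫ ω, W ω i ∂(P[|B]) = 0 := hcW i
  rw [h1, h2, mul_zero, sub_zero, add_zero]
  have hvar : condVar P B Y = ∫ ω, (Y ω - condE P B Y) ^ 2 ∂(P[|B]) := rfl
  rw [hvar, mul_comm]
end

section
/- Let n ≥ 2, let R be a positive real random variable with E[R²] = n and let U be independent of R and uniformly distributed on the unit sphere of ℝⁿ; set Z := R • U. Let B₁ ⊆ ℝ be Borel with P[Z₁ ∈ B₁] > 0 and write B := {Z₁ ∈ B₁}. Then: (i) E_B[Z_i Z_j] = 0 whenever i ≠ j; (ii) E_B[Z_i] = 0 for every i ≥ 2; and (iii) E_B[Z_i²] = E_B[Z_j²] for all i, j ≥ 2. -/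
open MeasureTheory ProbabilityTheory Matrix

lemma condE_eq {Ω : Type*} [MeasurableSpace Ω] (P : Measure Ω) (B : Set Ω) (f : Ω → ℝ) :
    condE P B f = (P B)⁻¹.toReal • ∫ ω in B, f ω ∂P := by
  rw [condE, ProbabilityTheory.cond, integral_smul_measure]

lemma key_invariance {Ω : Type*} [MeasurableSpace Ω] (P : Measure Ω) [IsProbabilityMeasure P]
    {n : ℕ} (h0 : 0 < n)
    (R : Ω → ℝ) (U : Ω → Fin n → ℝ) (hR : Measurable R) (hU : Measurable U)
    (hUrot : ∀ O : Matrix (Fin n) (Fin n) ℝ, O * Oᵀ = 1 →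
      Measure.map (fun ω => O *ᵥ U ω) P = Measure.map U P)
    (hindep : IndepFun R U P)
    (B₁ : Set ℝ) (hB₁ : MeasurableSet B₁)
    (σ : Equiv.Perm (Fin n)) (ε : Fin n → ℝ) (hε : ∀ k, ε k = 1 ∨ ε k = -1)
    (hσ0 : σ ⟨0, h0⟩ = ⟨0, h0⟩) (hε0 : ε ⟨0, h0⟩ = 1)
    (f : (Fin n → ℝ) → ℝ) (hf : Measurable f) :
    ∫ ω in (fun ω => R ω * U ω ⟨0, h0⟩) ⁻¹' B₁, f (R ω • U ω) ∂P
      = ∫ ω in (fun ω => R ω * U ω ⟨0, h0⟩) ⁻¹' B₁,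
          f (fun k => ε k * (R ω • U ω) (σ k)) ∂P := by
  set i0 : Fin n := ⟨0, h0⟩ with hi0
  set T : (Fin n → ℝ) → (Fin n → ℝ) := fun u k => ε k * u (σ k) with hT
  set O : Matrix (Fin n) (Fin n) ℝ := Matrix.of (fun k l => if σ k = l then ε k else 0) with hO
  have hOT : ∀ u : Fin n → ℝ, O *ᵥ u = T u := by
    intro u; funext k
    simp only [Matrix.mulVec, dotProduct, hO, Matrix.of_apply, hT, ite_mul, zero_mul]
    rw [Finset.sum_ite_eq Finset.univ (σ k) (fun l => ε k * u l)]
    simp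
  have hOorth : O * Oᵀ = 1 := by
    ext k m
    simp only [Matrix.mul_apply, Matrix.transpose_apply, hO, Matrix.of_apply, ite_mul, zero_mul,
      mul_ite, mul_zero, Finset.sum_ite_eq, Finset.sum_ite_eq', Finset.mem_univ, if_true,
      EmbeddingLike.apply_eq_iff_eq, Matrix.one_apply]
    rcases eq_or_ne k m with h | h
    · subst h
      rcases hε k with h1 | h1 <;> simp [h1]
    · simp [h, fun hc => h (σ.injective hc)]
  have hTmeas : Measurable T :=
    measurable_pi_lambda _ fun k =>
      (show Measurable (fun c : Fin n → ℝ => ε k * c (σ k)) by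
        fun_prop)
  have hmapU : Measure.map (fun ω => T (U ω)) P = Measure.map U P := by
    have := hUrot O hOorth
    rwa [show (fun ω => O *ᵥ U ω) = fun ω => T (U ω) from funext fun ω => hOT (U ω)] at this
  have hUT : Measurable fun ω => T (U ω) := hTmeas.comp hU
  have hindep' : IndepFun R (fun ω => T (U ω)) P := hindep.comp measurable_id hTmeas
  have hpair : Measure.map (fun ω => (R ω, T (U ω))) P = Measure.map (fun ω => (R ω, U ω)) P := by
    rw [(indepFun_iff_map_prod_eq_prod_map_map hR.aemeasurable hUT.aemeasurable).1 hindep',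
      (indepFun_iff_map_prod_eq_prod_map_map hR.aemeasurable hU.aemeasurable).1 hindep, hmapU]
  set F : ℝ × (Fin n → ℝ) → ℝ :=
    fun p => Set.indicator B₁ (fun _ => (1:ℝ)) (p.1 * p.2 i0) * f (p.1 • p.2) with hF
  have hsmul : Measurable fun p : ℝ × (Fin n → ℝ) => p.1 • p.2 := by
    apply measurable_pi_lambda
    intro k
    have h1 : Measurable fun p : ℝ × (Fin n → ℝ) => p.1 * p.2 k :=
      measurable_fst.mul ((measurable_pi_apply k).comp measurable_snd)
    simpa [Pi.smul_apply, smul_eq_mul] using h1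
  have hFmeas : Measurable F := by
    apply Measurable.mul
    · exact (measurable_const.indicator hB₁).comp
        (measurable_fst.mul ((measurable_pi_apply i0).comp measurable_snd))
    · exact hf.comp hsmul
  have hSmeas : MeasurableSet ((fun ω => R ω * U ω i0) ⁻¹' B₁) :=
    (hR.mul ((measurable_pi_apply i0).comp hU)) hB₁
  have hL : ∀ ω, Set.indicator ((fun ω => R ω * U ω i0) ⁻¹' B₁)
      (fun ω => f (R ω • U ω)) ω = F (R ω, U ω) := by
    intro ω
    by_cases hω : R ω * U ω i0 ∈ B₁ <;>
      simp [Set.indicator, hF, hω, Set.mem_preimage]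
  have hRmid : ∀ ω, F (R ω, T (U ω)) = Set.indicator ((fun ω => R ω * U ω i0) ⁻¹' B₁)
      (fun ω => f (fun k => ε k * (R ω • U ω) (σ k))) ω := by
    intro ω
    have h1 : T (U ω) i0 = U ω i0 := by simp [hT, hσ0, hε0]
    have h2 : (R ω • T (U ω)) = fun k => ε k * (R ω • U ω) (σ k) := by
      funext k; simp only [hT, Pi.smul_apply, smul_eq_mul]; ring
    by_cases hω : R ω * U ω i0 ∈ B₁ <;>
      simp [Set.indicator, hF, h1, h2, hω, Set.mem_preimage]
  calc ∫ ω in (fun ω => R ω * U ω i0) ⁻¹' B₁, f (R ω • U ω) ∂P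
      = ∫ ω, F (R ω, U ω) ∂P := by
        rw [← integral_indicator hSmeas]; exact integral_congr_ae (Filter.Eventually.of_forall hL)
    _ = ∫ p, F p ∂(Measure.map (fun ω => (R ω, U ω)) P) :=
        (integral_map (hR.prodMk hU).aemeasurable hFmeas.aestronglyMeasurable).symm
    _ = ∫ p, F p ∂(Measure.map (fun ω => (R ω, T (U ω))) P) := by rw [hpair]
    _ = ∫ ω, F (R ω, T (U ω)) ∂P :=
        integral_map (hR.prodMk hUT).aemeasurable hFmeas.aestronglyMeasurable
    _ = ∫ ω in (fun ω => R ω * U ω i0) ⁻¹' B₁,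
          f (fun k => ε k * (R ω • U ω) (σ k)) ∂P := by
        rw [← integral_indicator hSmeas]
        exact integral_congr_ae (Filter.Eventually.of_forall hRmid)

theorem spherical_conditional_moments
    {Ω : Type*} [MeasurableSpace Ω] (P : Measure Ω) [IsProbabilityMeasure P]
    (n : ℕ) (hn : 2 ≤ n)
    (R : Ω → ℝ) (U : Ω → Fin n → ℝ) (hR : Measurable R) (hU : Measurable U)
    (hRpos : ∀ᵐ ω ∂P, 0 < R ω)
    (hR2 : ∫ ω, R ω ^ 2 ∂P = (n : ℝ))
    (hRL2 : MemLp R 2 P)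
    (hUsphere : ∀ᵐ ω ∂P, ∑ i, U ω i ^ 2 = 1)
    (hUrot : ∀ O : Matrix (Fin n) (Fin n) ℝ, O * Oᵀ = 1 →
      Measure.map (fun ω => O *ᵥ U ω) P = Measure.map U P)
    (hindep : IndepFun R U P)
    (Z : Ω → Fin n → ℝ) (hZ : Z = fun ω => R ω • U ω)
    (B₁ : Set ℝ) (hB₁ : MeasurableSet B₁)
    (B : Set Ω) (hB : B = (fun ω => Z ω ⟨0, by omega⟩) ⁻¹' B₁) (hBpos : 0 < P B) :
    (∀ i j : Fin n, i ≠ j → condE P B (fun ω => Z ω i * Z ω j) = 0) ∧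
    (∀ i : Fin n, i ≠ ⟨0, by omega⟩ → condE P B (fun ω => Z ω i) = 0) ∧
    (∀ i j : Fin n, i ≠ ⟨0, by omega⟩ → j ≠ ⟨0, by omega⟩ →
      condE P B (fun ω => Z ω i ^ 2) = condE P B (fun ω => Z ω j ^ 2)) := by
  have h0 : 0 < n := by omega
  set i0 : Fin n := ⟨0, h0⟩ with hi0
  subst hZ
  have hBeq : B = (fun ω => R ω * U ω i0) ⁻¹' B₁ := by
    rw [hB]; rfl
  -- flip at a single coordinate k ≠ 0
  have flip : ∀ (k : Fin n), k ≠ i0 → ∀ (f : (Fin n → ℝ) → ℝ), Measurable f →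
      ∫ ω in B, f (R ω • U ω) ∂P
        = ∫ ω in B, f (fun l => (if l = k then (-1:ℝ) else 1) * (R ω • U ω) l) ∂P := by
    intro k hk f hf
    rw [hBeq]
    exact key_invariance P h0 R U hR hU hUrot hindep B₁ hB₁ (Equiv.refl _)
      (fun l => if l = k then (-1:ℝ) else 1)
      (fun l => by by_cases h : l = k <;> simp [h])
      rfl (if_neg (Ne.symm hk)) f hf
  refine ⟨?_, ?_, ?_⟩
  · -- (i) off-diagonal
    intro i j hij
    have hkey : ∫ ω in B, (R ω • U ω) i * (R ω • U ω) j ∂P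
        = - ∫ ω in B, (R ω • U ω) i * (R ω • U ω) j ∂P := by
      obtain ⟨k, hk, hsign⟩ : ∃ k, k ≠ i0 ∧
          (if i = k then (-1:ℝ) else 1) * (if j = k then (-1:ℝ) else 1) = -1 := by
        rcases eq_or_ne i i0 with hi | hi
        · have hj : j ≠ i0 := by rw [hi] at hij; exact hij.symm
          exact ⟨j, hj, by simp [if_neg hij, if_pos rfl]⟩
        · exact ⟨i, hi, by simp [if_pos rfl, if_neg (Ne.symm hij)]⟩
      calc ∫ ω in B, (R ω • U ω) i * (R ω • U ω) j ∂P
          = ∫ ω in B, (fun z => z i * z j)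
              (fun l => (if l = k then (-1:ℝ) else 1) * (R ω • U ω) l) ∂P :=
            flip k hk (fun z => z i * z j)
              ((measurable_pi_apply i).mul (measurable_pi_apply j))
        _ = ∫ ω in B, -((R ω • U ω) i * (R ω • U ω) j) ∂P := by
            apply integral_congr_ae; filter_upwards with ω
            have : ((if i = k then (-1:ℝ) else 1) * (R ω • U ω) i) *
                ((if j = k then (-1:ℝ) else 1) * (R ω • U ω) j)
                = ((if i = k then (-1:ℝ) else 1) * (if j = k then (-1:ℝ) else 1)) *
                  ((R ω • U ω) i * (R ω • U ω) j) := by ring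
            show _ = _
            rw [this, hsign]; ring
        _ = - ∫ ω in B, (R ω • U ω) i * (R ω • U ω) j ∂P := integral_neg _
    have hzero : ∫ ω in B, (R ω • U ω) i * (R ω • U ω) j ∂P = 0 := by linarith
    rw [condE_eq, hzero, smul_zero]
  · -- (ii) mean zero
    intro i hi
    have hkey : ∫ ω in B, (R ω • U ω) i ∂P = - ∫ ω in B, (R ω • U ω) i ∂P := by
      calc ∫ ω in B, (R ω • U ω) i ∂P
          = ∫ ω in B, (fun z => z i)
              (fun l => (if l = i then (-1:ℝ) else 1) * (R ω • U ω) l) ∂P :=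
            flip i hi (fun z => z i) (measurable_pi_apply i)
        _ = ∫ ω in B, -((R ω • U ω) i) ∂P := by
            apply integral_congr_ae; filter_upwards with ω
            simp
        _ = - ∫ ω in B, (R ω • U ω) i ∂P := integral_neg _
    have hzero : ∫ ω in B, (R ω • U ω) i ∂P = 0 := by linarith
    rw [condE_eq, hzero, smul_zero]
  · -- (iii) equal second moments
    intro i j hi hj
    rcases eq_or_ne i j with h | h
    · rw [h]
    have hswap0 : Equiv.swap i j i0 = i0 :=
      Equiv.swap_apply_of_ne_of_ne (Ne.symm hi) (Ne.symm hj)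
    have hkey : ∫ ω in B, (R ω • U ω) i ^ 2 ∂P = ∫ ω in B, (R ω • U ω) j ^ 2 ∂P := by
      have hmain := key_invariance P h0 R U hR hU hUrot hindep B₁ hB₁ (Equiv.swap i j)
        (fun _ => (1:ℝ)) (fun _ => Or.inl rfl) hswap0 rfl
        (fun z => z i ^ 2) ((measurable_pi_apply i).pow measurable_const)
      rw [hBeq]
      calc ∫ ω in (fun ω => R ω * U ω i0) ⁻¹' B₁, (R ω • U ω) i ^ 2 ∂P
          = ∫ ω in (fun ω => R ω * U ω i0) ⁻¹' B₁,
              (fun z => z i ^ 2)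
                (fun k => (1:ℝ) * (R ω • U ω) (Equiv.swap i j k)) ∂P := hmain
        _ = ∫ ω in (fun ω => R ω * U ω i0) ⁻¹' B₁, (R ω • U ω) j ^ 2 ∂P := by
            apply integral_congr_ae; filter_upwards with ω
            simp [Equiv.swap_apply_left]
    rw [condE_eq, condE_eq, hkey]
end

section
/- Let n ≥ 2 and let X = μ + R•(A *ᵥ U) be an elliptically distributed random vector with benchmark Y = a ⬝ᵥ X. For an event B = {Y ∈ B₁} with B₁ Borel, P[B] > 0 and Var_B[Y] > 0, define k(B) := (1/(n−1))·(E_B[R²] − E_B[(Y − a⬝ᵥμ)²]/â) and k'(B) := k(B)·â / Var_B[Y]. Then the normalized conditional covariance matrix satisfies (1/Var_B[Y]) • Var_B[X] = k'(B) • (1/â) • Σ + (1 − k'(B)) • (β βᵀ). -/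
open MeasureTheory ProbabilityTheory Matrix

lemma permMatrix_orth {n : ℕ} (σ : Equiv.Perm (Fin n)) :
    (σ.permMatrix ℝ) * (σ.permMatrix ℝ)ᵀ = 1 := by
  rw [← PEquiv.toMatrix_symm, ← PEquiv.toMatrix_trans]
  simp [← Equiv.toPEquiv_symm, ← Equiv.toPEquiv_trans]

lemma permMatrix_mulVec {n : ℕ} (σ : Equiv.Perm (Fin n)) (v : Fin n → ℝ) (i : Fin n) :
    ((σ.permMatrix ℝ) *ᵥ v) i = v (σ i) := by
  simp [Matrix.mulVec, dotProduct, PEquiv.toMatrix_apply, Equiv.toPEquiv_apply]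

lemma sign_diag_orth {n : ℕ} (d : Fin n → ℝ) (hd : ∀ i, d i = 1 ∨ d i = -1) :
    (Matrix.diagonal d) * (Matrix.diagonal d)ᵀ = 1 := by
  rw [Matrix.diagonal_transpose, Matrix.diagonal_mul_diagonal]
  have : (fun i => d i * d i) = fun _ => (1:ℝ) := by
    funext i; rcases hd i with h | h <;> simp [h]
  rw [this, Matrix.diagonal_one]

lemma diag_mulVec {n : ℕ} (d : Fin n → ℝ) (v : Fin n → ℝ) (i : Fin n) :
    ((Matrix.diagonal d) *ᵥ v) i = d i * v i := by
  simp [Matrix.mulVec_diagonal]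

lemma measurable_mulVec {n : ℕ} (M : Matrix (Fin n) (Fin n) ℝ) :
    Measurable (fun v : Fin n → ℝ => M *ᵥ v) :=
  (LinearMap.continuous_of_finiteDimensional (Matrix.mulVecLin M)).measurable

lemma joint_map_eq {Ω : Type*} [MeasurableSpace Ω] (P : Measure Ω) [IsProbabilityMeasure P]
    {n : ℕ} (R : Ω → ℝ) (U : Ω → Fin n → ℝ) (hR : Measurable R) (hU : Measurable U)
    (hUrot : ∀ O : Matrix (Fin n) (Fin n) ℝ, O * Oᵀ = 1 →
      Measure.map (fun ω => O *ᵥ U ω) P = Measure.map U P)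
    (hindep : IndepFun R U P)
    (M : Matrix (Fin n) (Fin n) ℝ) (hM : M * Mᵀ = 1) :
    Measure.map (fun ω => (R ω, M *ᵥ U ω)) P = Measure.map (fun ω => (R ω, U ω)) P := by
  have hMU : Measurable (fun ω => M *ᵥ U ω) := (measurable_mulVec M).comp hU
  have hind2 : IndepFun R (fun ω => M *ᵥ U ω) P :=
    hindep.comp measurable_id (measurable_mulVec M)
  rw [(indepFun_iff_map_prod_eq_prod_map_map hR.aemeasurable hMU.aemeasurable).mp hind2,
    (indepFun_iff_map_prod_eq_prod_map_map hR.aemeasurable hU.aemeasurable).mp hindep,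
    hUrot M hM]

lemma int_rot {Ω : Type*} [MeasurableSpace Ω] (P : Measure Ω) [IsProbabilityMeasure P]
    {n : ℕ} (R : Ω → ℝ) (U : Ω → Fin n → ℝ) (hR : Measurable R) (hU : Measurable U)
    (hUrot : ∀ O : Matrix (Fin n) (Fin n) ℝ, O * Oᵀ = 1 →
      Measure.map (fun ω => O *ᵥ U ω) P = Measure.map U P)
    (hindep : IndepFun R U P)
    (M : Matrix (Fin n) (Fin n) ℝ) (hM : M * Mᵀ = 1)
    (F : ℝ → (Fin n → ℝ) → ℝ) (hF : Measurable (Function.uncurry F)) :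
    ∫ ω, F (R ω) (M *ᵥ U ω) ∂P = ∫ ω, F (R ω) (U ω) ∂P := by
  have hMU : Measurable (fun ω => (R ω, M *ᵥ U ω)) :=
    hR.prodMk ((measurable_mulVec M).comp hU)
  have hRU : Measurable (fun ω => (R ω, U ω)) := hR.prodMk hU
  have h1 := integral_map (μ := P) (f := Function.uncurry F) hMU.aemeasurable
    hF.aestronglyMeasurable
  have h2 := integral_map (μ := P) (f := Function.uncurry F) hRU.aemeasurable
    hF.aestronglyMeasurable
  rw [joint_map_eq P R U hR hU hUrot hindep M hM] at h1
  rw [h2] at h1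
  simpa [Function.uncurry] using h1.symm

lemma exists_orth_row {n : ℕ} [NeZero n] (w : Fin n → ℝ) (hw : ∑ i, w i ^ 2 = 1) :
    ∃ O : Matrix (Fin n) (Fin n) ℝ, O * Oᵀ = 1 ∧ ∀ j, O 0 j = w j := by
  classical
  set E := EuclideanSpace ℝ (Fin n)
  let v : Fin n → E := fun _ => (WithLp.toLp 2 w : E)
  have hv : Orthonormal ℝ (Set.restrict {(0 : Fin n)} v) := by
    rw [orthonormal_iff_ite]
    rintro ⟨i, hi⟩ ⟨j, hj⟩
    simp only [Set.mem_singleton_iff] at hi hj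
    subst hi; subst hj
    simp only [if_pos rfl, Set.restrict_apply]
    show (inner ℝ (v 0) (v 0) : ℝ) = 1
    rw [PiLp.inner_apply]
    simpa [pow_two] using hw
  obtain ⟨b, hb⟩ := hv.exists_orthonormalBasis_extension_of_card_eq
    (by simp [E, finrank_euclideanSpace])
  refine ⟨Matrix.of (fun i j => (b i : EuclideanSpace ℝ (Fin n)) j), ?_, ?_⟩
  · ext i k
    have horth := b.orthonormal
    rw [orthonormal_iff_ite] at horth
    have := horth i k
    rw [PiLp.inner_apply] at this
    simp only [Matrix.mul_apply, Matrix.transpose_apply, Matrix.of_apply]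
    simp only [RCLike.inner_apply, conj_trivial] at this
    rw [Matrix.one_apply, ← this]
    exact Finset.sum_congr rfl fun _ _ => mul_comm _ _
  · intro j
    have : b 0 = v 0 := hb 0 rfl
    simp [this, v, Matrix.of_apply]

lemma cov_expand {Ω : Type*} [MeasurableSpace Ω] (μ : Measure Ω) [IsProbabilityMeasure μ]
    (f g : Ω → ℝ) (hf : Integrable f μ) (hg : Integrable g μ)
    (hfg : Integrable (fun ω => f ω * g ω) μ) :
    ∫ ω, (f ω - ∫ x, f x ∂μ) * (g ω - ∫ x, g x ∂μ) ∂μ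
      = (∫ ω, f ω * g ω ∂μ) - (∫ x, f x ∂μ) * (∫ x, g x ∂μ) := by
  have h1 : (fun ω => (f ω - ∫ x, f x ∂μ) * (g ω - ∫ x, g x ∂μ))
      = fun ω => f ω * g ω - ((∫ x, f x ∂μ) * g ω + (∫ x, g x ∂μ) * f ω
          - (∫ x, f x ∂μ) * (∫ x, g x ∂μ)) := by
    funext ω; ring
  have i1 : Integrable (fun ω => (∫ x, f x ∂μ) * g ω + (∫ x, g x ∂μ) * f ω
      - (∫ x, f x ∂μ) * (∫ x, g x ∂μ)) μ :=
    ((hg.const_mul _).add (hf.const_mul _)).sub (integrable_const _)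
  have i2 : Integrable (fun ω => (∫ x, f x ∂μ) * g ω + (∫ x, g x ∂μ) * f ω) μ :=
    (hg.const_mul _).add (hf.const_mul _)
  rw [h1, integral_sub hfg i1, integral_sub i2 (integrable_const _),
    integral_add (hg.const_mul _) (hf.const_mul _), integral_const_mul, integral_const_mul,
    integral_const, probReal_univ]
  simp; ring

lemma integral_const_add_smul {Ω : Type*} [MeasurableSpace Ω] (μ : Measure Ω)
    [IsProbabilityMeasure μ] (c s : ℝ) (h : Ω → ℝ) (hh : Integrable h μ) :
    ∫ ω, c + s * h ω ∂μ = c + s * ∫ ω, h ω ∂μ := by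
  rw [integral_add (integrable_const c) (hh.const_mul s), integral_const, integral_const_mul,
    probReal_univ]
  simp

lemma condE_eq_indicator {Ω : Type*} [MeasurableSpace Ω] (P : Measure Ω) {B : Set Ω}
    (hBm : MeasurableSet B) (f : Ω → ℝ) :
    condE P B f = (P B).toReal⁻¹ * ∫ ω, B.indicator f ω ∂P := by
  rw [condE, ProbabilityTheory.cond, integral_smul_measure, integral_indicator hBm,
    ENNReal.toReal_inv, smul_eq_mul]

lemma integrable_cond {Ω : Type*} [MeasurableSpace Ω] {P : Measure Ω} {B : Set Ω}
    (hBne : P B ≠ 0) {f : Ω → ℝ} (hf : Integrable f P) : Integrable f (P[|B]) :=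
  (hf.restrict (s := B)).smul_measure (ENNReal.inv_ne_top.mpr hBne)
set_option maxHeartbeats 2000000 in
theorem normalized_conditional_covariance_matrix_elliptical
    {Ω : Type*} [MeasurableSpace Ω] (P : Measure Ω) [IsProbabilityMeasure P]
    (n : ℕ) (hn : 2 ≤ n)
    (R : Ω → ℝ) (U : Ω → Fin n → ℝ) (hR : Measurable R) (hU : Measurable U)
    (hRpos : ∀ᵐ ω ∂P, 0 < R ω)
    (hR2 : ∫ ω, R ω ^ 2 ∂P = (n : ℝ))
    (hRL2 : MemLp R 2 P)
    (hUsphere : ∀ᵐ ω ∂P, ∑ i, U ω i ^ 2 = 1)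
    (hUrot : ∀ O : Matrix (Fin n) (Fin n) ℝ, O * Oᵀ = 1 →
      Measure.map (fun ω => O *ᵥ U ω) P = Measure.map U P)
    (hindep : IndepFun R U P)
    (μv : Fin n → ℝ) (A : Matrix (Fin n) (Fin n) ℝ) (hA : IsUnit A.det)
    (a : Fin n → ℝ) (ha : a ≠ 0)
    (X : Ω → Fin n → ℝ) (hX : X = fun ω => μv + R ω • (A *ᵥ U ω))
    (Y : Ω → ℝ) (hY : Y = fun ω => a ⬝ᵥ X ω)
    (hXL2 : ∀ i, MemLp (fun ω => X ω i) 2 P)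
    (S : Matrix (Fin n) (Fin n) ℝ) (hS : S = A * Aᵀ)
    (ahat : ℝ) (hahat : ahat = a ⬝ᵥ (S *ᵥ a))
    (β : Fin n → ℝ) (hβ : β = (1 / ahat) • (S *ᵥ a))
    (B₁ : Set ℝ) (hB₁ : MeasurableSet B₁)
    (B : Set Ω) (hB : B = Y ⁻¹' B₁) (hBpos : 0 < P B)
    (hVarYpos : 0 < condVar P B Y)
    (kB : ℝ)
    (hkB : kB = (1 / ((n : ℝ) - 1)) *
      (condE P B (fun ω => R ω ^ 2) - condE P B (fun ω => (Y ω - a ⬝ᵥ μv) ^ 2) / ahat))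
    (kB' : ℝ) (hkB' : kB' = kB * ahat / condVar P B Y) :
    ∀ i j, (1 / condVar P B Y) * condCov P B (fun ω => X ω i) (fun ω => X ω j)
      = kB' * ((1 / ahat) * S i j) + (1 - kB') * (β i * β j) := by
  classical
  have hNe : NeZero n := ⟨by omega⟩
  -- positivity of ahat
  have hAu : IsUnit A := (Matrix.isUnit_iff_isUnit_det A).mpr hA
  have hATa : Aᵀ *ᵥ a ≠ 0 := by
    have hAtu : IsUnit Aᵀ := (Matrix.isUnit_iff_isUnit_det Aᵀ).mpr
      (by rwa [Matrix.det_transpose])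
    have hinj : Function.Injective (Aᵀ).mulVec :=
      Matrix.mulVec_injective_iff_isUnit.mpr hAtu
    intro h
    exact ha (hinj (show Aᵀ *ᵥ a = Aᵀ *ᵥ 0 by simp [h]))
  have hahat_sq : ahat = ∑ i, (Aᵀ *ᵥ a) i ^ 2 := by
    rw [hahat, hS, ← Matrix.mulVec_mulVec, dotProduct_mulVec a A,
      ← Matrix.mulVec_transpose]
    simp [dotProduct, pow_two]
  have hahat_pos : 0 < ahat := by
    rw [hahat_sq]
    rcases Function.ne_iff.mp hATa with ⟨i, hi⟩
    exact Finset.sum_pos' (fun j _ => sq_nonneg _) ⟨i, Finset.mem_univ i, pow_two_pos_of_ne_zero hi⟩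
  set s : ℝ := Real.sqrt ahat with hs_def
  have hs_pos : 0 < s := Real.sqrt_pos.mpr hahat_pos
  have hs_sq : s ^ 2 = ahat := Real.sq_sqrt hahat_pos.le
  -- the unit vector w and the orthogonal matrix O
  set w : Fin n → ℝ := fun j => s⁻¹ * (Aᵀ *ᵥ a) j with hw_def
  have hw_norm : ∑ i, w i ^ 2 = 1 := by
    have : ∑ i, w i ^ 2 = s⁻¹ ^ 2 * ∑ i, (Aᵀ *ᵥ a) i ^ 2 := by
      rw [Finset.mul_sum]; congr 1; funext i; ring
    rw [this, ← hahat_sq]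
    field_simp [hs_sq]
    exact hs_sq.symm
  obtain ⟨O, hOorth, hOrow⟩ := exists_orth_row w hw_norm
  have hOtO : Oᵀ * O = 1 := mul_eq_one_comm.mp hOorth
  set V : Ω → Fin n → ℝ := fun ω => O *ᵥ U ω with hV_def
  have hVmeas : Measurable V := (measurable_mulVec O).comp hU
  set M : Matrix (Fin n) (Fin n) ℝ := A * Oᵀ with hM_def
  have hMMt : M * Mᵀ = S := by
    rw [hM_def, hS, Matrix.transpose_mul, Matrix.transpose_transpose, Matrix.mul_assoc,
      ← Matrix.mul_assoc Oᵀ O Aᵀ, hOtO, Matrix.one_mul]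
  have hM0 : ∀ i, M i 0 = s * β i := by
    intro i
    have h1 : M i 0 = (A *ᵥ w) i := by
      simp only [hM_def, Matrix.mul_apply, Matrix.mulVec, dotProduct,
        Matrix.transpose_apply]
      exact Finset.sum_congr rfl fun j _ => by rw [hOrow j]
    have hww : w = s⁻¹ • (Aᵀ *ᵥ a) := rfl
    have h2 : A *ᵥ w = s⁻¹ • (S *ᵥ a) := by
      rw [hww, Matrix.mulVec_smul, hS, ← Matrix.mulVec_mulVec]
    rw [h1, h2, hβ]
    simp only [Pi.smul_apply, smul_eq_mul]
    have : ahat = s * s := by rw [← hs_sq]; ring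
    field_simp [this]
    rw [hs_sq]
    ring
  -- X and Y in terms of R, V
  have hMV : ∀ ω, M *ᵥ V ω = A *ᵥ U ω := by
    intro ω
    rw [hV_def, Matrix.mulVec_mulVec, hM_def, Matrix.mul_assoc, hOtO, Matrix.mul_one]
  have hXZ : ∀ ω i, X ω i = μv i + R ω * (M *ᵥ V ω) i := by
    intro ω i
    rw [hMV ω, hX]
    simp [Matrix.mulVec]
  have hww : w = s⁻¹ • (Aᵀ *ᵥ a) := rfl
  have hV0 : ∀ ω, V ω 0 = s⁻¹ * ((Aᵀ *ᵥ a) ⬝ᵥ U ω) := by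
    intro ω
    have h1 : V ω 0 = w ⬝ᵥ U ω := by
      simp only [hV_def, Matrix.mulVec]
      exact congrArg (fun z => dotProduct z (U ω)) (funext fun j => hOrow j)
    rw [h1, hww, smul_dotProduct, smul_eq_mul]
  have hYV : ∀ ω, Y ω = a ⬝ᵥ μv + s * (R ω * V ω 0) := by
    intro ω
    rw [hY, hX]
    simp only [dotProduct_add]
    congr 1
    rw [hV0, dotProduct_smul, dotProduct_mulVec, ← Matrix.mulVec_transpose,
      smul_eq_mul]
    field_simp
  -- norm of V
  have hVnorm : ∀ᵐ ω ∂P, ∑ k, V ω k ^ 2 = 1 := by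
    filter_upwards [hUsphere] with ω hω
    have h1 : ∑ k, V ω k ^ 2 = V ω ⬝ᵥ V ω := by
      simp [dotProduct, pow_two]
    have h2 : V ω ⬝ᵥ V ω = (Oᵀ *ᵥ V ω) ⬝ᵥ U ω := by
      conv_lhs => rw [show V ω = O *ᵥ U ω from rfl]
      rw [dotProduct_mulVec, Matrix.mulVec_transpose]
    have h3 : Oᵀ *ᵥ V ω = U ω := by
      rw [show V ω = O *ᵥ U ω from rfl, Matrix.mulVec_mulVec, hOtO, Matrix.one_mulVec]
    rw [h1, h2, h3]
    simpa [dotProduct, pow_two] using hω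
  have hVbd : ∀ᵐ ω ∂P, ∀ k, |V ω k| ≤ 1 := by
    filter_upwards [hVnorm] with ω hω k
    have h2 : V ω k ^ 2 ≤ 1 := by
      rw [← hω]
      exact Finset.single_le_sum (f := fun k => V ω k ^ 2) (fun i _ => sq_nonneg _)
        (Finset.mem_univ k)
    nlinarith [sq_abs (V ω k), abs_nonneg (V ω k)]
  -- indicator and conditional measure setup
  set c : ℝ := a ⬝ᵥ μv with hc_def
  set I : ℝ → ℝ := Set.indicator B₁ (fun _ => (1:ℝ)) with hI_def
  have hImeas : Measurable I := measurable_const.indicator hB₁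
  have hIbd : ∀ y, |I y| ≤ 1 := by
    intro y
    by_cases h : y ∈ B₁ <;> simp [hI_def, Set.indicator_apply, h]
  have hVk : ∀ k, Measurable fun ω => V ω k := fun k => (measurable_pi_apply k).comp hVmeas
  have hYmeas : Measurable Y := by
    have : Y = fun ω => c + s * (R ω * V ω 0) := funext hYV
    rw [this]
    exact measurable_const.add ((hR.mul (hVk 0)).const_mul s)
  have hBmeas : MeasurableSet B := hB ▸ hYmeas hB₁
  have hBne : P B ≠ 0 := hBpos.ne'
  set p : ℝ := (P B).toReal with hp_def
  have hp_pos : 0 < p := ENNReal.toReal_pos hBne (measure_ne_top P B)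
  haveI hPB : IsProbabilityMeasure (P[|B]) := cond_isProbabilityMeasure hBne
  have hind : ∀ (f : Ω → ℝ) (ω : Ω), B.indicator f ω = I (Y ω) * f ω := by
    intro f ω
    by_cases h : ω ∈ B
    · have hy : Y ω ∈ B₁ := by rwa [hB, Set.mem_preimage] at h
      simp [Set.indicator_of_mem h, hI_def, Set.indicator_of_mem hy]
    · have hy : Y ω ∉ B₁ := by rwa [hB, Set.mem_preimage] at h
      simp [Set.indicator_of_notMem h, hI_def, Set.indicator_of_notMem hy]
  have hcondE : ∀ f : Ω → ℝ, condE P B f = p⁻¹ * ∫ ω, I (Y ω) * f ω ∂P := by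
    intro f
    rw [condE_eq_indicator P hBmeas f, show B.indicator f = fun ω => I (Y ω) * f ω from
      funext (hind f)]
  -- rotational invariance of integrals of F (R ω) (V ω)
  have rot : ∀ (F : ℝ → (Fin n → ℝ) → ℝ), Measurable (Function.uncurry F) →
      ∀ Q : Matrix (Fin n) (Fin n) ℝ, Q * Qᵀ = 1 →
      ∫ ω, F (R ω) (Q *ᵥ V ω) ∂P = ∫ ω, F (R ω) (V ω) ∂P := by
    intro F hF Q hQ
    have hQO : (Q * O) * (Q * O)ᵀ = 1 := by
      rw [Matrix.transpose_mul, ← Matrix.mul_assoc, Matrix.mul_assoc Q O Oᵀ, hOorth,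
        Matrix.mul_one, hQ]
    have h1 := int_rot P R U hR hU hUrot hindep (Q * O) hQO F hF
    have h2 := int_rot P R U hR hU hUrot hindep O hOorth F hF
    calc ∫ ω, F (R ω) (Q *ᵥ V ω) ∂P = ∫ ω, F (R ω) ((Q * O) *ᵥ U ω) ∂P := by
          congr 1; funext ω; rw [show V ω = O *ᵥ U ω from rfl, Matrix.mulVec_mulVec]
      _ = ∫ ω, F (R ω) (U ω) ∂P := h1
      _ = ∫ ω, F (R ω) (V ω) ∂P := h2.symm
  -- integrability
  have hR2int : Integrable (fun ω => R ω ^ 2) P := hRL2.integrable_sq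
  have hRint : Integrable R P := hRL2.integrable one_le_two
  have hIRVVint : ∀ k l, Integrable (fun ω => I (Y ω) * (R ω ^ 2 * (V ω k * V ω l))) P := by
    intro k l
    refine Integrable.mono' hR2int
      ((hImeas.comp hYmeas).mul ((hR.pow_const 2).mul
        ((hVk k).mul (hVk l)))).aestronglyMeasurable ?_
    filter_upwards [hVbd] with ω hω
    rw [Real.norm_eq_abs, abs_mul, abs_mul, abs_mul]
    have h4 : |R ω ^ 2| = R ω ^ 2 := abs_of_nonneg (sq_nonneg _)
    calc |I (Y ω)| * (|R ω ^ 2| * (|V ω k| * |V ω l|))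
        ≤ 1 * (|R ω ^ 2| * (1 * 1)) := by
          gcongr
          · exact hIbd (Y ω)
          · exact hω k
          · exact hω l
      _ = R ω ^ 2 := by rw [h4]; ring
  have hIRVint : ∀ k, Integrable (fun ω => I (Y ω) * (R ω * V ω k)) P := by
    intro k
    refine Integrable.mono' hRint.abs
      ((hImeas.comp hYmeas).mul (hR.mul (hVk k))).aestronglyMeasurable ?_
    filter_upwards [hVbd] with ω hω
    rw [Real.norm_eq_abs, abs_mul, abs_mul]
    calc |I (Y ω)| * (|R ω| * |V ω k|)
        ≤ 1 * (|R ω| * 1) := by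
          gcongr
          · exact hIbd (Y ω)
          · exact hω k
      _ = |R ω| := by ring
  have hIR2int : Integrable (fun ω => I (Y ω) * R ω ^ 2) P := by
    refine Integrable.mono' hR2int
      ((hImeas.comp hYmeas).mul (hR.pow_const 2)).aestronglyMeasurable ?_
    refine Filter.Eventually.of_forall fun ω => ?_
    rw [Real.norm_eq_abs, abs_mul]
    have h4 : |R ω ^ 2| = R ω ^ 2 := abs_of_nonneg (sq_nonneg _)
    calc |I (Y ω)| * |R ω ^ 2| ≤ 1 * |R ω ^ 2| := by gcongr; exact hIbd (Y ω)
      _ = R ω ^ 2 := by rw [h4]; ring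
  -- test function families
  set F2 : Fin n → Fin n → ℝ → (Fin n → ℝ) → ℝ :=
    fun k l r v => I (c + s * (r * v 0)) * (r ^ 2 * (v k * v l)) with hF2_def
  set F1 : Fin n → ℝ → (Fin n → ℝ) → ℝ :=
    fun k r v => I (c + s * (r * v 0)) * (r * v k) with hF1_def
  have hsndk : ∀ k : Fin n, Measurable (fun q : ℝ × (Fin n → ℝ) => q.2 k) := fun k =>
    (measurable_pi_apply k).comp measurable_snd
  have hfst : Measurable (fun q : ℝ × (Fin n → ℝ) => q.1) := measurable_fst
  have hargmeas : Measurable (fun q : ℝ × (Fin n → ℝ) => c + s * (q.1 * q.2 0)) :=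
    measurable_const.add ((hfst.mul (hsndk 0)).const_mul s)
  have hF2meas : ∀ k l, Measurable (Function.uncurry (F2 k l)) := by
    intro k l
    show Measurable fun q : ℝ × (Fin n → ℝ) =>
      I (c + s * (q.1 * q.2 0)) * (q.1 ^ 2 * (q.2 k * q.2 l))
    exact (hImeas.comp hargmeas).mul ((hfst.pow_const 2).mul ((hsndk k).mul (hsndk l)))
  have hF1meas : ∀ k, Measurable (Function.uncurry (F1 k)) := by
    intro k
    show Measurable fun q : ℝ × (Fin n → ℝ) =>
      I (c + s * (q.1 * q.2 0)) * (q.1 * q.2 k)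
    exact (hImeas.comp hargmeas).mul (hfst.mul (hsndk k))
  -- the basic integral quantities
  set J2 : Fin n → Fin n → ℝ := fun k l => ∫ ω, I (Y ω) * (R ω ^ 2 * (V ω k * V ω l)) ∂P
    with hJ2_def
  set J1 : Fin n → ℝ := fun k => ∫ ω, I (Y ω) * (R ω * V ω k) ∂P with hJ1_def
  set T : ℝ := ∫ ω, I (Y ω) * R ω ^ 2 ∂P with hT_def
  have hJ2F : ∀ k l, J2 k l = ∫ ω, F2 k l (R ω) (V ω) ∂P := by
    intro k l
    simp only [hJ2_def, hF2_def]
    congr 1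
    funext ω
    rw [hYV ω]
  have hJ1F : ∀ k, J1 k = ∫ ω, F1 k (R ω) (V ω) ∂P := by
    intro k
    simp only [hJ1_def, hF1_def]
    congr 1
    funext ω
    rw [hYV ω]
  -- off-diagonal terms vanish
  have hJ2skew : ∀ k l, k ≠ l → J2 k l = 0 := by
    intro k l hkl
    set t : Fin n := if l = 0 then k else l with ht_def
    have ht0 : t ≠ 0 := by
      rcases eq_or_ne l 0 with h | h
      · rw [ht_def, if_pos h]
        exact fun hk => hkl (hk.trans h.symm)
      · rwa [ht_def, if_neg h]
    have htkl : ¬(t = k ∧ t = l) := by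
      rintro ⟨h1, h2⟩
      exact hkl (h1.symm.trans h2)
    have htor : t = k ∨ t = l := by
      rcases eq_or_ne l 0 with h | h
      · exact Or.inl (by rw [ht_def, if_pos h])
      · exact Or.inr (by rw [ht_def, if_neg h])
    set d : Fin n → ℝ := fun i => if i = t then -1 else 1 with hd_def
    have hQ : (Matrix.diagonal d) * (Matrix.diagonal d)ᵀ = 1 :=
      sign_diag_orth d (fun i => by
        by_cases h : i = t
        · exact Or.inr (by rw [hd_def]; simp [h])
        · exact Or.inl (by rw [hd_def]; simp [h]))
    have h0 : d 0 = 1 := by rw [hd_def]; simp [Ne.symm ht0]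
    have hdd : d k * d l = -1 := by
      rcases htor with h | h
      · have hdk : d k = -1 := by rw [hd_def]; simp [h.symm]
        have hdl : d l = 1 := by
          rw [hd_def]
          have : l ≠ t := fun hl => htkl ⟨h, hl.symm⟩
          simp [this]
        rw [hdk, hdl]; ring
      · have hdl : d l = -1 := by rw [hd_def]; simp [h.symm]
        have hdk : d k = 1 := by
          rw [hd_def]
          have : k ≠ t := fun hk => htkl ⟨hk.symm, h⟩
          simp [this]
        rw [hdk, hdl]; ring
    have hrot := rot (F2 k l) (hF2meas k l) (Matrix.diagonal d) hQ
    have hptw : ∀ ω, F2 k l (R ω) ((Matrix.diagonal d) *ᵥ V ω) = - F2 k l (R ω) (V ω) := by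
      intro ω
      simp only [hF2_def, diag_mulVec]
      have e1 : (d k * V ω k) * (d l * V ω l) = -(V ω k * V ω l) := by
        calc (d k * V ω k) * (d l * V ω l) = (d k * d l) * (V ω k * V ω l) := by ring
          _ = -(V ω k * V ω l) := by rw [hdd]; ring
      rw [h0, one_mul, e1]
      ring
    have h1 : ∫ ω, F2 k l (R ω) ((Matrix.diagonal d) *ᵥ V ω) ∂P
        = - ∫ ω, F2 k l (R ω) (V ω) ∂P := by
      rw [show (fun ω => F2 k l (R ω) ((Matrix.diagonal d) *ᵥ V ω))
        = fun ω => - F2 k l (R ω) (V ω) from funext hptw, integral_neg]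
    rw [hJ2F k l]
    rw [h1] at hrot
    linarith
  -- first-order terms vanish
  have hJ1zero : ∀ k, k ≠ 0 → J1 k = 0 := by
    intro k hk
    set d : Fin n → ℝ := fun i => if i = k then -1 else 1 with hd_def
    have hQ : (Matrix.diagonal d) * (Matrix.diagonal d)ᵀ = 1 :=
      sign_diag_orth d (fun i => by
        by_cases h : i = k
        · exact Or.inr (by rw [hd_def]; simp [h])
        · exact Or.inl (by rw [hd_def]; simp [h]))
    have h0 : d 0 = 1 := by rw [hd_def]; simp [Ne.symm hk]
    have hdk : d k = -1 := by rw [hd_def]; simp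
    have hrot := rot (F1 k) (hF1meas k) (Matrix.diagonal d) hQ
    have hptw : ∀ ω, F1 k (R ω) ((Matrix.diagonal d) *ᵥ V ω) = - F1 k (R ω) (V ω) := by
      intro ω
      simp only [hF1_def, diag_mulVec]
      rw [h0, one_mul, hdk]
      ring
    have h1 : ∫ ω, F1 k (R ω) ((Matrix.diagonal d) *ᵥ V ω) ∂P
        = - ∫ ω, F1 k (R ω) (V ω) ∂P := by
      rw [show (fun ω => F1 k (R ω) ((Matrix.diagonal d) *ᵥ V ω))
        = fun ω => - F1 k (R ω) (V ω) from funext hptw, integral_neg]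
    rw [hJ1F k]
    rw [h1] at hrot
    linarith
  -- diagonal terms are all equal (away from 0)
  set k1 : Fin n := ⟨1, by omega⟩ with hk1_def
  have hk10 : k1 ≠ 0 := by
    rw [hk1_def]
    simp [Fin.ext_iff]
  have hdiagEq : ∀ k, k ≠ 0 → J2 k k = J2 k1 k1 := by
    intro k hk
    by_cases hkk : k = k1
    · rw [hkk]
    · set σ : Equiv.Perm (Fin n) := Equiv.swap k k1 with hσ_def
      have hrot := rot (F2 k k) (hF2meas k k) (σ.permMatrix ℝ) (permMatrix_orth σ)
      have hptw : ∀ ω, F2 k k (R ω) ((σ.permMatrix ℝ) *ᵥ V ω) = F2 k1 k1 (R ω) (V ω) := by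
        intro ω
        simp only [hF2_def, _root_.permMatrix_mulVec]
        rw [hσ_def]
        rw [Equiv.swap_apply_of_ne_of_ne (Ne.symm hk) (Ne.symm hk10), Equiv.swap_apply_left]
      rw [hJ2F k k, hJ2F k1 k1, ← hrot,
        show (fun ω => F2 k k (R ω) ((σ.permMatrix ℝ) *ᵥ V ω))
          = fun ω => F2 k1 k1 (R ω) (V ω) from funext hptw]
  -- trace identity
  have hsum : ∑ k, J2 k k = T := by
    simp only [hJ2_def, hT_def]
    rw [← integral_finset_sum _ (fun k _ => hIRVVint k k)]
    apply integral_congr_ae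
    filter_upwards [hVnorm] with ω hω
    have e1 : ∑ k, I (Y ω) * (R ω ^ 2 * (V ω k * V ω k)) = I (Y ω) * R ω ^ 2 * ∑ k, V ω k ^ 2 := by
      rw [Finset.mul_sum]
      exact Finset.sum_congr rfl fun k _ => by ring
    show ∑ k, I (Y ω) * (R ω ^ 2 * (V ω k * V ω k)) = I (Y ω) * R ω ^ 2
    rw [e1, hω, mul_one]
  have hcard : ∑ k, J2 k k = J2 0 0 + ((n : ℝ) - 1) * J2 k1 k1 := by
    rw [← Finset.add_sum_erase _ _ (Finset.mem_univ (0 : Fin n))]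
    congr 1
    have e1 : ∀ k ∈ Finset.univ.erase (0 : Fin n), J2 k k = J2 k1 k1 := by
      intro k hkm
      exact hdiagEq k (Finset.mem_erase.mp hkm).1
    rw [Finset.sum_congr rfl e1, Finset.sum_const, Finset.card_erase_of_mem (Finset.mem_univ _),
      Finset.card_univ, Fintype.card_fin, nsmul_eq_mul, Nat.cast_sub (by omega), Nat.cast_one]
  have hE1 : ((n : ℝ) - 1) * J2 k1 k1 = T - J2 0 0 := by linarith
  -- the centered variables
  set Z : Fin n → Ω → ℝ := fun i ω => R ω * (M *ᵥ V ω) i with hZ_def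
  have hZsum : ∀ i ω, Z i ω = R ω * ∑ k, M i k * V ω k := by
    intro i ω
    simp [hZ_def, Matrix.mulVec, dotProduct]
  have hZmeas : ∀ i, Measurable (Z i) := by
    intro i
    exact hR.mul ((measurable_pi_apply i).comp ((measurable_mulVec M).comp hVmeas))
  have hZbd : ∀ i, ∀ᵐ ω ∂P, |Z i ω| ≤ (∑ k, |M i k|) * |R ω| := by
    intro i
    filter_upwards [hVbd] with ω hω
    rw [hZsum i ω, abs_mul, mul_comm]
    have h1 : |∑ k, M i k * V ω k| ≤ ∑ k, |M i k| := by
      calc |∑ k, M i k * V ω k| ≤ ∑ k, |M i k * V ω k| := Finset.abs_sum_le_sum_abs _ _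
        _ ≤ ∑ k, |M i k| := by
          apply Finset.sum_le_sum
          intro k _
          rw [abs_mul]
          calc |M i k| * |V ω k| ≤ |M i k| * 1 :=
                mul_le_mul_of_nonneg_left (hω k) (abs_nonneg _)
            _ = |M i k| := mul_one _
    exact mul_le_mul_of_nonneg_right h1 (abs_nonneg _)
  have hZint : ∀ i, Integrable (Z i) P := by
    intro i
    exact Integrable.mono' ((hRint.abs).const_mul (∑ k, |M i k|))
      (hZmeas i).aestronglyMeasurable (by simpa [Real.norm_eq_abs] using hZbd i)
  have hZZint : ∀ i j, Integrable (fun ω => Z i ω * Z j ω) P := by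
    intro i j
    refine Integrable.mono' (hR2int.const_mul ((∑ k, |M i k|) * (∑ k, |M j k|)))
      ((hZmeas i).mul (hZmeas j)).aestronglyMeasurable ?_
    filter_upwards [hZbd i, hZbd j] with ω h1 h2
    rw [Real.norm_eq_abs, abs_mul]
    have hnn : ∀ l : Fin n → ℝ, (0:ℝ) ≤ ∑ k, |l k| := fun l =>
      Finset.sum_nonneg fun k _ => abs_nonneg _
    calc |Z i ω| * |Z j ω| ≤ ((∑ k, |M i k|) * |R ω|) * ((∑ k, |M j k|) * |R ω|) :=
          mul_le_mul h1 h2 (abs_nonneg _) (mul_nonneg (hnn _) (abs_nonneg _))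
      _ = (∑ k, |M i k|) * (∑ k, |M j k|) * (|R ω| * |R ω|) := by ring
      _ = (∑ k, |M i k|) * (∑ k, |M j k|) * R ω ^ 2 := by
          rw [← abs_mul, ← pow_two, abs_of_nonneg (sq_nonneg _)]
  set W : Ω → ℝ := fun ω => R ω * V ω 0 with hW_def
  have hWmeas : Measurable W := hR.mul (hVk 0)
  have hWint : Integrable W P := by
    refine Integrable.mono' hRint.abs (hWmeas.aestronglyMeasurable) ?_
    filter_upwards [hVbd] with ω hω
    rw [Real.norm_eq_abs, hW_def, abs_mul]
    calc |R ω| * |V ω 0| ≤ |R ω| * 1 := mul_le_mul_of_nonneg_left (hω 0) (abs_nonneg _)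
      _ = |R ω| := mul_one _
  have hW2int : Integrable (fun ω => W ω ^ 2) P := by
    refine Integrable.mono' hR2int ((hWmeas.pow_const 2).aestronglyMeasurable) ?_
    filter_upwards [hVbd] with ω hω
    rw [Real.norm_eq_abs, abs_of_nonneg (sq_nonneg _), hW_def, mul_pow]
    have h1 : V ω 0 ^ 2 ≤ 1 := by
      rw [← sq_abs]
      calc |V ω 0| ^ 2 ≤ 1 ^ 2 := pow_le_pow_left₀ (abs_nonneg _) (hω 0) 2
        _ = 1 := one_pow 2
    calc R ω ^ 2 * V ω 0 ^ 2 ≤ R ω ^ 2 * 1 := mul_le_mul_of_nonneg_left h1 (sq_nonneg _)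
      _ = R ω ^ 2 := mul_one _
  -- conditional expectation of Z i
  have hcondZ : ∀ i, condE P B (Z i) = p⁻¹ * (s * β i * J1 0) := by
    intro i
    rw [hcondE]
    congr 1
    have e : ∀ ω, I (Y ω) * Z i ω = ∑ k, M i k * (I (Y ω) * (R ω * V ω k)) := by
      intro ω
      rw [hZsum i ω, Finset.mul_sum]
      rw [Finset.mul_sum]
      exact Finset.sum_congr rfl fun k _ => by ring
    rw [show (fun ω => I (Y ω) * Z i ω)
        = fun ω => ∑ k, M i k * (I (Y ω) * (R ω * V ω k)) from funext e,
      integral_finset_sum _ (fun k _ => (hIRVint k).const_mul _)]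
    have e2 : ∀ k, (∫ ω, M i k * (I (Y ω) * (R ω * V ω k)) ∂P) = M i k * J1 k := by
      intro k
      rw [integral_const_mul]
    rw [Finset.sum_congr rfl (fun k _ => e2 k)]
    rw [Finset.sum_eq_single (0 : Fin n)
      (fun k _ hk => by rw [hJ1zero k hk, mul_zero])
      (fun h => absurd (Finset.mem_univ _) h), hM0 i]
  -- conditional expectation of Z i * Z j
  have hcondZZ : ∀ i j, condE P B (fun ω => Z i ω * Z j ω)
      = p⁻¹ * (s ^ 2 * (β i * β j) * (J2 0 0 - J2 k1 k1) + S i j * J2 k1 k1) := by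
    intro i j
    rw [hcondE]
    congr 1
    have e : ∀ ω, I (Y ω) * (Z i ω * Z j ω)
        = ∑ k, ∑ l, M i k * M j l * (I (Y ω) * (R ω ^ 2 * (V ω k * V ω l))) := by
      intro ω
      rw [hZsum i ω, hZsum j ω]
      rw [show R ω * (∑ k, M i k * V ω k) * (R ω * ∑ l, M j l * V ω l)
          = R ω ^ 2 * ((∑ k, M i k * V ω k) * (∑ l, M j l * V ω l)) from by ring,
        Finset.sum_mul_sum]
      rw [Finset.mul_sum, Finset.mul_sum]
      refine Finset.sum_congr rfl fun k _ => ?_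
      rw [Finset.mul_sum, Finset.mul_sum]
      refine Finset.sum_congr rfl fun l _ => ?_
      ring
    rw [show (fun ω => I (Y ω) * (Z i ω * Z j ω))
        = fun ω => ∑ k, ∑ l, M i k * M j l * (I (Y ω) * (R ω ^ 2 * (V ω k * V ω l)))
        from funext e,
      integral_finset_sum _ (fun k _ =>
        integrable_finset_sum _ (fun l _ => (hIRVVint k l).const_mul _))]
    have e2 : ∀ k, (∫ ω, ∑ l, M i k * M j l * (I (Y ω) * (R ω ^ 2 * (V ω k * V ω l))) ∂P)
        = M i k * M j k * J2 k k := by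
      intro k
      rw [integral_finset_sum _ (fun l _ => (hIRVVint k l).const_mul _)]
      have e3 : ∀ l, (∫ ω, M i k * M j l * (I (Y ω) * (R ω ^ 2 * (V ω k * V ω l))) ∂P)
          = M i k * M j l * J2 k l := fun l => integral_const_mul _ _
      rw [Finset.sum_congr rfl (fun l _ => e3 l)]
      exact Finset.sum_eq_single k
        (fun l _ hl => by rw [hJ2skew k l (Ne.symm hl), mul_zero])
        (fun h => absurd (Finset.mem_univ _) h)
    rw [Finset.sum_congr rfl (fun k _ => e2 k)]
    have hMS : ∑ k, M i k * M j k = S i j := by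
      rw [← hMMt]
      simp [Matrix.mul_apply, Matrix.transpose_apply]
    rw [← Finset.add_sum_erase _ _ (Finset.mem_univ (0 : Fin n))]
    have e4 : ∀ k ∈ Finset.univ.erase (0 : Fin n),
        M i k * M j k * J2 k k = M i k * M j k * J2 k1 k1 := by
      intro k hkm
      rw [hdiagEq k (Finset.mem_erase.mp hkm).1]
    rw [Finset.sum_congr rfl e4, ← Finset.sum_mul]
    have e5 : ∑ k ∈ Finset.univ.erase (0 : Fin n), M i k * M j k
        = S i j - M i 0 * M j 0 := by
      rw [← hMS, ← Finset.add_sum_erase _ _ (Finset.mem_univ (0 : Fin n))]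
      ring
    rw [e5, hM0 i, hM0 j]
    ring
  -- conditional moments of W
  have hcondW : condE P B W = p⁻¹ * J1 0 := by
    rw [hcondE]
  have hcondW2 : condE P B (fun ω => W ω ^ 2) = p⁻¹ * J2 0 0 := by
    rw [hcondE]
    congr 1
    congr 1
    funext ω
    rw [hW_def]
    ring
  -- conditional integrability
  have hint' : ∀ f : Ω → ℝ, Integrable f P → Integrable f (P[|B]) := fun f hf =>
    integrable_cond hBne hf
  -- conditional variance of Y
  have hcondY : condE P B Y = c + s * condE P B W := by
    show (∫ ω, Y ω ∂(P[|B])) = c + s * ∫ ω, W ω ∂(P[|B])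
    rw [show Y = fun ω => c + s * W ω from funext hYV]
    exact integral_const_add_smul _ c s W (hint' W hWint)
  have hVarY : condVar P B Y = s ^ 2 * (p⁻¹ * J2 0 0 - (p⁻¹ * J1 0) ^ 2) := by
    have hWW : (∫ x, W x ∂(P[|B])) = condE P B W := rfl
    have h1 : condVar P B Y
        = (∫ ω, (W ω - ∫ x, W x ∂(P[|B])) * (W ω - ∫ x, W x ∂(P[|B])) ∂(P[|B])) * s ^ 2 := by
      show (∫ ω, (Y ω - condE P B Y) ^ 2 ∂(P[|B])) = _
      rw [← integral_mul_const]
      congr 1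
      funext ω
      rw [hWW, hcondY, hYV ω]
      ring
    have h2 : Integrable (fun ω => W ω * W ω) P :=
      hW2int.congr (Filter.Eventually.of_forall fun ω => by
        show W ω ^ 2 = W ω * W ω
        ring)
    rw [h1, cov_expand (P[|B]) W W (hint' W hWint) (hint' W hWint) (hint' _ h2)]
    have h3 : (∫ ω, W ω * W ω ∂(P[|B])) = condE P B (fun ω => W ω ^ 2) :=
      integral_congr_ae (Filter.Eventually.of_forall fun ω => by
        show W ω * W ω = W ω ^ 2
        ring)
    rw [h3, hWW, hcondW2, hcondW]
    ring
  -- closed form for kB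
  have hn1 : ((n : ℝ) - 1) ≠ 0 := by
    have : (2 : ℝ) ≤ n := by exact_mod_cast hn
    linarith
  have hcondR2 : condE P B (fun ω => R ω ^ 2) = p⁻¹ * T := by rw [hcondE]
  have hcondYc2 : condE P B (fun ω => (Y ω - c) ^ 2) = s ^ 2 * (p⁻¹ * J2 0 0) := by
    have e : (fun ω => (Y ω - c) ^ 2) = fun ω => s ^ 2 * W ω ^ 2 :=
      funext fun ω => by rw [hYV ω]; ring
    rw [e]
    have e2 : condE P B (fun ω => s ^ 2 * W ω ^ 2) = s ^ 2 * condE P B (fun ω => W ω ^ 2) := by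
      show (∫ ω, s ^ 2 * W ω ^ 2 ∂(P[|B])) = _
      exact integral_const_mul _ _
    rw [e2, hcondW2]
  have hkB_eq : kB = p⁻¹ * J2 k1 k1 := by
    have hda : s ^ 2 * (p⁻¹ * J2 0 0) / ahat = p⁻¹ * J2 0 0 := by
      rw [← hs_sq]
      field_simp
    rw [hkB, hcondR2, hcondYc2, hda,
      show J2 k1 k1 = (T - J2 0 0) / ((n : ℝ) - 1) from by
        rw [eq_div_iff hn1]
        linear_combination hE1]
    ring
  -- covariance expansion
  have hcondX : ∀ i, condE P B (fun ω => X ω i) = μv i + condE P B (Z i) := by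
    intro i
    show (∫ ω, X ω i ∂(P[|B])) = μv i + ∫ ω, Z i ω ∂(P[|B])
    rw [show (fun ω => X ω i) = fun ω => μv i + 1 * Z i ω from
      funext fun ω => by rw [hXZ ω i]; ring]
    rw [integral_const_add_smul _ (μv i) 1 (Z i) (hint' _ (hZint i))]
    ring
  have hcovEq : ∀ i j, condCov P B (fun ω => X ω i) (fun ω => X ω j)
      = condE P B (fun ω => Z i ω * Z j ω) - condE P B (Z i) * condE P B (Z j) := by
    intro i j
    have e : (fun ω => (X ω i - condE P B fun ω => X ω i)
          * (X ω j - condE P B fun ω => X ω j))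
        = fun ω => (Z i ω - condE P B (Z i)) * (Z j ω - condE P B (Z j)) := by
      funext ω
      rw [hcondX i, hcondX j, hXZ ω i, hXZ ω j]
      ring
    show (∫ ω, (X ω i - condE P B fun ω => X ω i)
        * (X ω j - condE P B fun ω => X ω j) ∂(P[|B])) = _
    rw [e]
    exact cov_expand (P[|B]) (Z i) (Z j) (hint' _ (hZint i)) (hint' _ (hZint j))
      (hint' _ (hZZint i j))
  -- final computation
  intro i j
  have hDne : condVar P B Y ≠ 0 := ne_of_gt hVarYpos
  have key : condCov P B (fun ω => X ω i) (fun ω => X ω j)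
      = kB * S i j + (condVar P B Y - kB * ahat) * (β i * β j) := by
    rw [hcovEq i j, hcondZZ i j, hcondZ i, hcondZ j, hkB_eq, hVarY, ← hs_sq]
    ring
  rw [key, hkB']
  field_simp
end
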